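/- Let σ be a finite signature and let I, A be valued σ-structures with I non-negative finite-valued. Then there exist non-negative finite-valued σ-structures Y₁ and Y₂ such that: (1) there is a dual fractional homomorphism from I to Y₁; (2) Y₁ ≡₁ Y₂ (they have the same iterated degree sequence); and (3) Opt(Y₂,A) ≤ Opt^{SA¹}(I,A). -/

import Mathlib

open scoped BigOperators Classical

namespace PVCSP

/-! ## Valued structures -/

/-- The value `Val(I,A,h)` of an assignment `h : I → A`, where the input structure is
given by weights `vI` and the template structure by costs `vA` (in `ℚ ∪ {∞}`). -/
def Val {σ : Type} [Fintype σ] (ar : σ → ℕ) {I A : Type} [Fintype I]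
    (vI : ∀ R : σ, (Fin (ar R) → I) → ℚ)
    (vA : ∀ R : σ, (Fin (ar R) → A) → WithTop ℚ) (h : I → A) : WithTop ℚ :=
  ∑ R : σ, ∑ v : Fin (ar R) → I, (vI R v : WithTop ℚ) * vA R (fun i => h (v i))

/-- `Opt(I,A)`: the minimum value over all assignments. -/
def Opt {σ : Type} [Fintype σ] (ar : σ → ℕ) {I A : Type} [Fintype I] [DecidableEq I]
    [Fintype A]
    (vI : ∀ R : σ, (Fin (ar R) → I) → ℚ)
    (vA : ∀ R : σ, (Fin (ar R) → A) → WithTop ℚ) : WithTop ℚ :=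
  (Finset.univ : Finset (I → A)).inf fun h => Val ar vI vA h

/-- Non-negativity of an input (finite-valued) structure. -/
def NNeg {σ : Type} (ar : σ → ℕ) {I : Type}
    (vI : ∀ R : σ, (Fin (ar R) → I) → ℚ) : Prop :=
  ∀ R v, 0 ≤ vI R v

/-- A fractional homomorphism from `A` to `B`. -/
def IsFracHom {σ : Type} [Fintype σ] (ar : σ → ℕ) {A B : Type}
    [Fintype A] [DecidableEq A] [Fintype B]
    (vA : ∀ R : σ, (Fin (ar R) → A) → WithTop ℚ)
    (vB : ∀ R : σ, (Fin (ar R) → B) → WithTop ℚ)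
    (μ : (A → B) → ℚ) : Prop :=
  (∀ f, 0 ≤ μ f) ∧ (∑ f : A → B, μ f = 1) ∧
    ∀ (R : σ) (a : Fin (ar R) → A),
      ∑ f : A → B, (μ f : WithTop ℚ) * vB R (fun i => f (a i)) ≤ vA R a

/-- A symmetric `n`-ary operation. -/
def IsSymmetricOp {A B : Type} {n : ℕ} (f : (Fin n → A) → B) : Prop :=
  ∀ (ρ : Equiv.Perm (Fin n)) (x : Fin n → A), f (fun i => x (ρ i)) = f x

/-- An `n`-ary fractional polymorphism of the pair `(A,B)`. -/
def IsFracPoly {σ : Type} [Fintype σ] (ar : σ → ℕ) {A B : Type}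
    [Fintype A] [DecidableEq A] [Fintype B]
    (vA : ∀ R : σ, (Fin (ar R) → A) → WithTop ℚ)
    (vB : ∀ R : σ, (Fin (ar R) → B) → WithTop ℚ)
    (n : ℕ) (ω : ((Fin n → A) → B) → ℚ) : Prop :=
  (∀ f, 0 ≤ ω f) ∧ (∑ f : (Fin n → A) → B, ω f = 1) ∧
    ∀ (R : σ) (a : Fin n → (Fin (ar R) → A)),
      ∑ f : (Fin n → A) → B, (ω f : WithTop ℚ) * vB R (fun j => f (fun i => a i j))
        ≤ ((((n : ℚ)⁻¹ : ℚ)) : WithTop ℚ) * ∑ i : Fin n, vA R (a i)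

/-- A dual fractional homomorphism from `I` to `J` (both non-negative finite-valued). -/
def IsDualFracHom {σ : Type} [Fintype σ] (ar : σ → ℕ) {I J : Type}
    [Fintype I] [DecidableEq I] [Fintype J] [DecidableEq J]
    (vI : ∀ R : σ, (Fin (ar R) → I) → ℚ)
    (vJ : ∀ R : σ, (Fin (ar R) → J) → ℚ)
    (η : (I → J) → ℚ) : Prop :=
  (∀ f, 0 ≤ η f) ∧ (∑ f : I → J, η f = 1) ∧
    ∀ (R : σ) (u : Fin (ar R) → J),
      ∑ f : I → J, η f *
          ∑ v ∈ Finset.univ.filter (fun v : Fin (ar R) → I => (fun i => f (v i)) = u), vI R v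
        ≤ vJ R u

/-! ## Linear programming relaxations -/

/-- Canonical embedding of `ℚ ∪ {∞}` into the extended reals. -/
noncomputable def toE (x : WithTop ℚ) : EReal :=
  x.recTopCoe ⊤ (fun q => ((q : ℝ) : EReal))

/-- The objective value of an LP solution `pc`. -/
def objVal {σ : Type} [Fintype σ] (ar : σ → ℕ) {I A : Type} [Fintype I] [Fintype A]
    (vI : ∀ R : σ, (Fin (ar R) → I) → ℚ)
    (vA : ∀ R : σ, (Fin (ar R) → A) → WithTop ℚ)
    (pc : ∀ R : σ, (Fin (ar R) → I) → (Fin (ar R) → A) → ℚ) : WithTop ℚ :=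
  ∑ R : σ, ∑ v : Fin (ar R) → I, ∑ a : Fin (ar R) → A,
    (pc R v a : WithTop ℚ) * ((vI R v : WithTop ℚ) * vA R a)

/-- Feasibility for the basic linear programming relaxation `BLP(I,A)`. -/
def BLPFeas {σ : Type} [Fintype σ] (ar : σ → ℕ) {I A : Type} [Fintype I] [Fintype A]
    [DecidableEq A]
    (vI : ∀ R : σ, (Fin (ar R) → I) → ℚ)
    (vA : ∀ R : σ, (Fin (ar R) → A) → WithTop ℚ)
    (pv : I → A → ℚ)
    (pc : ∀ R : σ, (Fin (ar R) → I) → (Fin (ar R) → A) → ℚ) : Prop :=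
  (∀ R v a, 0 < vI R v → 0 ≤ pc R v a) ∧
  (∀ u : I, ∑ a : A, pv u a = 1) ∧
  (∀ R v, 0 < vI R v → ∀ (i : Fin (ar R)) (a : A),
      pv (v i) a = ∑ t ∈ Finset.univ.filter (fun t : Fin (ar R) → A => t i = a), pc R v t) ∧
  (∀ R v, 0 < vI R v → ∀ t : Fin (ar R) → A, vA R t = ⊤ → pc R v t = 0)

/-- Feasibility for the Sherali–Adams relaxation `SA¹(I,A)`. -/
def SA1Feas {σ : Type} [Fintype σ] (ar : σ → ℕ) {I A : Type} [Fintype I] [Fintype A]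
    [DecidableEq A]
    (vI : ∀ R : σ, (Fin (ar R) → I) → ℚ)
    (vA : ∀ R : σ, (Fin (ar R) → A) → WithTop ℚ)
    (pv : I → A → ℚ)
    (pc : ∀ R : σ, (Fin (ar R) → I) → (Fin (ar R) → A) → ℚ) : Prop :=
  BLPFeas ar vI vA pv pc ∧
  (∀ R v, 0 < vI R v → ∀ t : Fin (ar R) → A,
      (∃ i j, v i = v j ∧ t i ≠ t j) → pc R v t = 0)

/-- The optimal value `Opt^BLP(I,A)` (equal to `⊤` if the program is infeasible). -/
noncomputable def OptBLP {σ : Type} [Fintype σ] (ar : σ → ℕ) {I A : Type}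
    [Fintype I] [Fintype A] [DecidableEq A]
    (vI : ∀ R : σ, (Fin (ar R) → I) → ℚ)
    (vA : ∀ R : σ, (Fin (ar R) → A) → WithTop ℚ) : EReal :=
  sInf { x : EReal | ∃ pv pc, BLPFeas ar vI vA pv pc ∧ x = toE (objVal ar vI vA pc) }

/-- The optimal value `Opt^{SA¹}(I,A)` (equal to `⊤` if the program is infeasible). -/
noncomputable def OptSA1 {σ : Type} [Fintype σ] (ar : σ → ℕ) {I A : Type}
    [Fintype I] [Fintype A] [DecidableEq A]
    (vI : ∀ R : σ, (Fin (ar R) → I) → ℚ)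
    (vA : ∀ R : σ, (Fin (ar R) → A) → WithTop ℚ) : EReal :=
  sInf { x : EReal | ∃ pv pc, SA1Feas ar vI vA pv pc ∧ x = toE (objVal ar vI vA pc) }

/-- The structure `LP^m(A)` on the universe of `m`-element multisets over `A`. -/
def lpPow {σ : Type} [Fintype σ] (ar : σ → ℕ) {A : Type} [Fintype A] [DecidableEq A]
    (m : ℕ) (vA : ∀ R : σ, (Fin (ar R) → A) → WithTop ℚ) :
    ∀ R : σ, (Fin (ar R) → Sym A m) → WithTop ℚ :=
  fun R s =>
    ((((m : ℚ)⁻¹ : ℚ)) : WithTop ℚ) *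
      ((Finset.univ.filter (fun t : Fin (ar R) → (Fin m → A) =>
          ∀ j, Multiset.map (t j) Finset.univ.val = Sym.toMultiset (s j))).inf
        (fun t => ∑ i : Fin m, vA R (fun j => t j i)))

/-! ## The graph of an input structure and iterated degrees -/

/-- Potential constraint vertices of the graph `G(I)`. -/
abbrev CVert (σ : Type) (ar : σ → ℕ) (I : Type) := Σ R : σ, (Fin (ar R) → I)

/-- The label of the edge between variable `u` and constraint `c`: the set of
coordinates of `c` at which `u` occurs. -/
def edgeLab {σ : Type} {ar : σ → ℕ} {I : Type} [DecidableEq I]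
    (u : I) (c : CVert σ ar I) : Finset ℕ :=
  (Finset.univ.filter (fun i : Fin (ar c.1) => c.2 i = u)).image Fin.val

/-- The type of `k`-th iterated degrees over signature `σ`. -/
def Deg (σ : Type) : ℕ → Type
  | 0 => Option (σ × ℚ)
  | k+1 => Multiset (Finset ℕ × Deg σ k)

/-- The `k`-th iterated degree of a vertex of `G(I)` (a variable or a constraint). -/
def degV {σ : Type} [Fintype σ] (ar : σ → ℕ) {I : Type} [Fintype I] [DecidableEq I]
    (vI : ∀ R : σ, (Fin (ar R) → I) → ℚ) :
    (k : ℕ) → (I ⊕ CVert σ ar I) → Deg σ k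
  | 0, Sum.inl _ => (none : Option (σ × ℚ))
  | 0, Sum.inr c => some (c.1, vI c.1 c.2)
  | k+1, Sum.inl u =>
      ((Finset.univ.filter
          (fun c : CVert σ ar I => 0 < vI c.1 c.2 ∧ ∃ i, c.2 i = u)).val).map
        (fun c => (edgeLab u c, degV ar vI k (Sum.inr c)))
  | k+1, Sum.inr c =>
      ((Finset.univ.filter (fun u : I => ∃ i, c.2 i = u)).val).map
        (fun u => (edgeLab u c, degV ar vI k (Sum.inl u)))

/-- The full iterated degree type. -/
def IterDeg (σ : Type) : Type := ∀ k : ℕ, Deg σ k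

/-- The iterated degree `δ(x)` of a vertex. -/
def itdeg {σ : Type} [Fintype σ] (ar : σ → ℕ) {I : Type} [Fintype I] [DecidableEq I]
    (vI : ∀ R : σ, (Fin (ar R) → I) → ℚ) (x : I ⊕ CVert σ ar I) : IterDeg σ :=
  fun k => degV ar vI k x

/-- The iterated degree sequence `δ(I)` (a multiset over all vertices of `G(I)`). -/
def degSeq {σ : Type} [Fintype σ] (ar : σ → ℕ) {I : Type} [Fintype I] [DecidableEq I]
    (vI : ∀ R : σ, (Fin (ar R) → I) → ℚ) : Multiset (IterDeg σ) :=
  (Finset.univ.val.map (fun u : I => itdeg ar vI (Sum.inl u))) +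
  ((Finset.univ.filter (fun c : CVert σ ar I => 0 < vI c.1 c.2)).val.map
      (fun c => itdeg ar vI (Sum.inr c)))

/-- Adjacency in the graph `G(I)`. -/
def Adj {σ : Type} (ar : σ → ℕ) {I : Type}
    (vI : ∀ R : σ, (Fin (ar R) → I) → ℚ) :
    (I ⊕ CVert σ ar I) → (I ⊕ CVert σ ar I) → Prop
  | Sum.inl u, Sum.inr c => 0 < vI c.1 c.2 ∧ ∃ i, c.2 i = u
  | Sum.inr c, Sum.inl u => 0 < vI c.1 c.2 ∧ ∃ i, c.2 i = u
  | _, _ => False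

/-- Actual vertices of `G(I)`: all variables and the positive-weight constraints. -/
def IsVert {σ : Type} (ar : σ → ℕ) {I : Type}
    (vI : ∀ R : σ, (Fin (ar R) → I) → ℚ) : (I ⊕ CVert σ ar I) → Prop
  | Sum.inl _ => True
  | Sum.inr c => 0 < vI c.1 c.2

/-- Connectedness of the input structure `I` (i.e. of its graph `G(I)`). -/
def Conn {σ : Type} (ar : σ → ℕ) {I : Type}
    (vI : ∀ R : σ, (Fin (ar R) → I) → ℚ) : Prop :=
  Nonempty I ∧ ∀ x y, IsVert ar vI x → IsVert ar vI y →
    Relation.ReflTransGen (Adj ar vI) x y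

/-- Weak congruence: `|J| ⬝ δ(I) = |I| ⬝ δ(J)`. -/
def WeakCongr {σ : Type} [Fintype σ] (ar : σ → ℕ) {I J : Type}
    [Fintype I] [DecidableEq I] [Fintype J] [DecidableEq J]
    (vI : ∀ R : σ, (Fin (ar R) → I) → ℚ)
    (vJ : ∀ R : σ, (Fin (ar R) → J) → ℚ) : Prop :=
  (Fintype.card J) • degSeq ar vI = (Fintype.card I) • degSeq ar vJ

/-- Membership of a variable in the connected component of the variable `x₀`. -/
def InComp {σ : Type} (ar : σ → ℕ) {I : Type}
    (vI : ∀ R : σ, (Fin (ar R) → I) → ℚ) (x₀ u : I) : Prop :=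
  Relation.ReflTransGen (Adj ar vI) (Sum.inl x₀) (Sum.inl u)


namespace LP

/-- Dot product over a finite index type. -/
def dot {ι : Type} [Fintype ι] (c x : ι → ℚ) : ℚ := ∑ i, c i * x i

/-- Feasibility for a finite system of linear inequalities `a · x ≤ b`. -/
def Feas {ι : Type} [Fintype ι] (L : Finset ((ι → ℚ) × ℚ)) (x : ι → ℚ) : Prop :=
  ∀ p ∈ L, dot p.1 x ≤ p.2

lemma dot_snoc {M : ℕ} (a : Fin (M+1) → ℚ) (y : Fin M → ℚ) (z : ℚ) :
    dot a (Fin.snoc y z) = dot (fun i => a i.castSucc) y + a (Fin.last M) * z := by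
  unfold dot
  rw [Fin.sum_univ_castSucc]
  simp

lemma dot_combo {ι : Type} [Fintype ι] (c₁ c₂ : ℚ) (a b y : ι → ℚ) :
    dot (fun i => c₁ * a i + c₂ * b i) y = c₁ * dot a y + c₂ * dot b y := by
  unfold dot
  rw [Finset.mul_sum, Finset.mul_sum, ← Finset.sum_add_distrib]
  congr 1; funext i; ring

lemma dot_fin1 (a y : Fin 1 → ℚ) : dot a y = a 0 * y 0 := by
  unfold dot; rw [Fin.sum_univ_one]

lemma dot_cons {M : ℕ} (a0 : ℚ) (ar : Fin M → ℚ) (x : Fin (M+1) → ℚ) :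
    dot (Fin.cons a0 ar) x = a0 * x 0 + dot ar (Fin.tail x) := by
  unfold dot
  rw [Fin.sum_univ_succ]
  simp [Fin.tail]

lemma fm_step {M : ℕ} (L : Finset ((Fin (M+1) → ℚ) × ℚ)) :
    ∃ L' : Finset ((Fin M → ℚ) × ℚ), ∀ y, Feas L' y ↔ ∃ z, Feas L (Fin.snoc y z) := by
  classical
  set ini : ((Fin (M+1) → ℚ) × ℚ) → (Fin M → ℚ) := fun p i => p.1 i.castSucc with hini
  set lst : ((Fin (M+1) → ℚ) × ℚ) → ℚ := fun p => p.1 (Fin.last M) with hlst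
  set L0 : Finset ((Fin M → ℚ) × ℚ) :=
    (L.filter (fun p => lst p = 0)).image (fun p => (ini p, p.2)) with hL0
  set Lc : Finset ((Fin M → ℚ) × ℚ) :=
    ((L.filter (fun p => 0 < lst p)) ×ˢ (L.filter (fun p => lst p < 0))).image
      (fun pq => (fun i => (-(lst pq.2)) * ini pq.1 i + (lst pq.1) * ini pq.2 i,
         (-(lst pq.2)) * pq.1.2 + (lst pq.1) * pq.2.2)) with hLc
  refine ⟨L0 ∪ Lc, fun y => ⟨fun hy => ?_, fun hz => ?_⟩⟩
  · -- forward: from feasibility of the projected system, find z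
    set U : Finset ℚ := (L.filter (fun p => 0 < lst p)).image
      (fun p => (p.2 - dot (ini p) y) / lst p) with hU
    set B : Finset ℚ := (L.filter (fun p => lst p < 0)).image
      (fun p => (p.2 - dot (ini p) y) / lst p) with hB
    have key : ∀ b ∈ B, ∀ u ∈ U, b ≤ u := by
      intro b hb u hu
      rw [hB, Finset.mem_image] at hb
      rw [hU, Finset.mem_image] at hu
      obtain ⟨qq, hq, rfl⟩ := hb
      obtain ⟨pp, hp, rfl⟩ := hu
      rw [Finset.mem_filter] at hq hp
      have hpq : (pp, qq) ∈ (L.filter (fun p => 0 < lst p)) ×ˢ (L.filter (fun p => lst p < 0)) := by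
        rw [Finset.mem_product]; exact ⟨Finset.mem_filter.mpr hp, Finset.mem_filter.mpr hq⟩
      have hrow := hy _ (Finset.mem_union_right _ (Finset.mem_image_of_mem _ hpq))
      rw [dot_combo] at hrow
      have h1 : 0 < lst pp := hp.2
      have h2 : lst qq < 0 := hq.2
      have hrow' : -lst qq * dot (ini pp) y + lst pp * dot (ini qq) y
          ≤ -lst qq * pp.2 + lst pp * qq.2 := by simpa using hrow
      have e1 : (qq.2 - dot (ini qq) y) / lst qq
          = (-(qq.2 - dot (ini qq) y)) / (-(lst qq)) := by
        rw [neg_div_neg_eq]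
      rw [e1, div_le_div_iff₀ (by linarith) h1]
      nlinarith [hrow']
    set z : ℚ := if hU' : U.Nonempty then U.min' hU' else
        (if hB' : B.Nonempty then B.max' hB' else 0) with hz
    have zle : ∀ u ∈ U, z ≤ u := by
      intro u hu
      rw [hz, dif_pos ⟨u, hu⟩]
      exact Finset.min'_le _ _ hu
    have zge : ∀ b ∈ B, b ≤ z := by
      intro b hb
      rw [hz]
      by_cases hU' : U.Nonempty
      · rw [dif_pos hU']
        exact Finset.le_min' _ _ _ (fun u hu => key b hb u hu)
      · rw [dif_neg hU', dif_pos ⟨b, hb⟩]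
        exact Finset.le_max' _ _ hb
    refine ⟨z, fun p hp => ?_⟩
    rw [dot_snoc]
    rcases lt_trichotomy (lst p) 0 with hneg | hzero | hpos
    · have hbm : (p.2 - dot (ini p) y) / lst p ∈ B :=
        Finset.mem_image_of_mem _ (Finset.mem_filter.mpr ⟨hp, hneg⟩)
      have := zge _ hbm
      have h2 : lst p * z ≤ lst p * ((p.2 - dot (ini p) y) / lst p) :=
        mul_le_mul_of_nonpos_left this (le_of_lt hneg)
      rw [mul_div_cancel₀ _ (ne_of_lt hneg)] at h2
      have : dot (fun i => p.1 i.castSucc) y = dot (ini p) y := rfl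
      rw [this]; linarith
    · have hrow := hy _ (Finset.mem_union_left _
        (Finset.mem_image_of_mem _ (Finset.mem_filter.mpr ⟨hp, hzero⟩)))
      have h1 : dot (fun i => p.1 i.castSucc) y = dot (ini p) y := rfl
      have h2 : p.1 (Fin.last M) = lst p := rfl
      rw [h1, h2, hzero]
      simpa using hrow
    · have hum : (p.2 - dot (ini p) y) / lst p ∈ U :=
        Finset.mem_image_of_mem _ (Finset.mem_filter.mpr ⟨hp, hpos⟩)
      have := zle _ hum
      have h2 : lst p * z ≤ lst p * ((p.2 - dot (ini p) y) / lst p) :=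
        mul_le_mul_of_nonneg_left this (le_of_lt hpos)
      rw [mul_div_cancel₀ _ (ne_of_gt hpos)] at h2
      have : dot (fun i => p.1 i.castSucc) y = dot (ini p) y := rfl
      rw [this]; linarith
  · -- backward
    obtain ⟨z, hz⟩ := hz
    intro r hr
    rcases Finset.mem_union.mp hr with h0 | hc
    · rw [Finset.mem_image] at h0
      obtain ⟨p, hp, rfl⟩ := h0
      rw [Finset.mem_filter] at hp
      have := hz p hp.1
      rw [dot_snoc] at this
      have h2 : p.1 (Fin.last M) = lst p := rfl
      rw [h2, hp.2] at this
      simpa using this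
    · rw [Finset.mem_image] at hc
      obtain ⟨pq, hpq, rfl⟩ := hc
      rw [Finset.mem_product, Finset.mem_filter, Finset.mem_filter] at hpq
      obtain ⟨⟨hpL, hppos⟩, ⟨hqL, hqneg⟩⟩ := hpq
      have hP : dot (ini pq.1) y + lst pq.1 * z ≤ pq.1.2 := by
        have := hz _ hpL; rw [dot_snoc] at this; exact this
      have hQ : dot (ini pq.2) y + lst pq.2 * z ≤ pq.2.2 := by
        have := hz _ hqL; rw [dot_snoc] at this; exact this
      rw [dot_combo]
      show _ ≤ -lst pq.2 * pq.1.2 + lst pq.1 * pq.2.2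
      have hP' : (-(lst pq.2)) * (dot (ini pq.1) y + lst pq.1 * z)
          ≤ (-(lst pq.2)) * pq.1.2 :=
        mul_le_mul_of_nonneg_left hP (by linarith)
      have hQ' : (lst pq.1) * (dot (ini pq.2) y + lst pq.2 * z)
          ≤ (lst pq.1) * pq.2.2 :=
        mul_le_mul_of_nonneg_left hQ (by linarith)
      nlinarith [hP', hQ']

lemma fm_iter : ∀ (k : ℕ) (L : Finset ((Fin (k+1) → ℚ) × ℚ)),
    ∃ L' : Finset ((Fin 1 → ℚ) × ℚ), ∀ y : Fin 1 → ℚ,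
      Feas L' y ↔ ∃ x : Fin (k+1) → ℚ, Feas L x ∧ x 0 = y 0 := by
  intro k
  induction k with
  | zero =>
    intro L
    refine ⟨L, fun y => ⟨fun hy => ⟨y, hy, rfl⟩, ?_⟩⟩
    rintro ⟨x, hx, h0⟩
    have : y = x := by
      funext i
      have := Fin.eq_zero i
      subst this
      exact h0.symm
    rw [this]; exact hx
  | succ k ih =>
    intro L
    obtain ⟨L₁, h₁⟩ := fm_step L
    obtain ⟨L', h'⟩ := ih L₁
    refine ⟨L', fun y => (h' y).trans ⟨?_, ?_⟩⟩
    · rintro ⟨w, hw, h0⟩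
      obtain ⟨z, hz⟩ := (h₁ w).mp hw
      refine ⟨Fin.snoc w z, hz, ?_⟩
      rw [← h0]
      rw [show (0 : Fin (k+1+1)) = Fin.castSucc 0 from (Fin.castSucc_zero).symm,
        Fin.snoc_castSucc]
    · rintro ⟨x, hx, h0⟩
      refine ⟨Fin.init x, (h₁ _).mpr ⟨x (Fin.last _), by rw [Fin.snoc_init_self]; exact hx⟩, ?_⟩
      show Fin.init x 0 = y 0
      unfold Fin.init
      rw [Fin.castSucc_zero]
      exact h0

lemma lp_min {ι : Type} [Fintype ι] [Nonempty ι] (L : Finset ((ι → ℚ) × ℚ)) (c : ι → ℚ)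
    (x₀ : ι → ℚ) (hx₀ : Feas L x₀) (q : ℚ) (hq : ∀ x, Feas L x → q ≤ dot c x) :
    ∃ x, Feas L x ∧ ∀ y, Feas L y → dot c x ≤ dot c y := by
  classical
  obtain ⟨k, hk⟩ : ∃ k, Fintype.card ι = k + 1 :=
    ⟨Fintype.card ι - 1, (Nat.succ_pred_eq_of_pos Fintype.card_pos).symm⟩
  set e : ι ≃ Fin (k+1) := Fintype.equivFinOfCardEq hk with he
  have hdot_re : ∀ (a : ι → ℚ) (w : Fin (k+1) → ℚ),
      dot (fun i => a (e.symm i)) w = dot a (fun v => w (e v)) := by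
    intro a w
    exact (Fintype.sum_equiv e (fun v => a v * w (e v)) (fun i => a (e.symm i) * w i)
      (fun v => by simp)).symm
  set objrow : (Fin (k+2) → ℚ) × ℚ := (Fin.cons (-1) (fun i => c (e.symm i)), 0) with hobjrow
  set Lrows : Finset ((Fin (k+2) → ℚ) × ℚ) :=
    L.image (fun p => (Fin.cons 0 (fun i => p.1 (e.symm i)), p.2)) ∪ {objrow} with hLrows
  have hrel : ∀ x' : Fin (k+2) → ℚ, Feas Lrows x' ↔
      (Feas L (fun v => Fin.tail x' (e v)) ∧ dot c (fun v => Fin.tail x' (e v)) ≤ x' 0) := by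
    intro x'
    constructor
    · intro hx'
      refine ⟨fun p hp => ?_, ?_⟩
      · have := hx' _ (Finset.mem_union_left _ (Finset.mem_image_of_mem _ hp))
        rw [dot_cons, hdot_re] at this
        linarith
      · have := hx' _ (Finset.mem_union_right _ (Finset.mem_singleton_self _))
        rw [hobjrow] at this
        rw [dot_cons, hdot_re] at this
        simp only at this
        linarith
    · rintro ⟨hfe, hob⟩
      intro r hr
      rcases Finset.mem_union.mp hr with h1 | h2
      · rw [Finset.mem_image] at h1
        obtain ⟨p, hp, rfl⟩ := h1
        rw [dot_cons, hdot_re]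
        have := hfe p hp
        linarith
      · rw [Finset.mem_singleton.mp h2, hobjrow, dot_cons, hdot_re]
        simp only
        linarith
  obtain ⟨L', h'⟩ := fm_iter (k+1) Lrows
  set Aset : Set ℚ := {z | Feas L' (fun _ => z)} with hAset
  have hmemA : ∀ z : ℚ, z ∈ Aset ↔ ∃ x : ι → ℚ, Feas L x ∧ dot c x ≤ z := by
    intro z
    constructor
    · intro hz
      obtain ⟨x', hx', h0⟩ := (h' _).mp hz
      obtain ⟨h1, h2⟩ := (hrel x').mp hx'
      exact ⟨_, h1, by rw [h0] at h2; exact h2⟩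
    · rintro ⟨x, hx, hcx⟩
      have htail : (fun v => Fin.tail (Fin.cons (α := fun _ : Fin (k+2) => ℚ) z
          (fun i => x (e.symm i))) (e v)) = x := by
        funext v
        rw [Fin.tail_cons]
        simp
      refine (h' _).mpr ⟨Fin.cons z (fun i : Fin (k+1) => x (e.symm i)), (hrel _).mpr ?_,
        by rw [Fin.cons_zero]⟩
      rw [htail]
      exact ⟨hx, by rw [Fin.cons_zero]; exact hcx⟩
  have hz₀ : dot c x₀ ∈ Aset := (hmemA _).mpr ⟨x₀, hx₀, le_refl _⟩
  have hlb : ∀ z ∈ Aset, q ≤ z := by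
    intro z hzA
    obtain ⟨x, hx, hcx⟩ := (hmemA z).mp hzA
    exact le_trans (hq x hx) hcx
  set negR := L'.filter (fun p => p.1 0 < 0) with hnegR
  have hneg_ne : negR.Nonempty := by
    by_contra hcon
    have hall : ∀ p ∈ L', 0 ≤ p.1 0 := by
      intro p hp
      by_contra hlt
      exact hcon ⟨p, Finset.mem_filter.mpr ⟨hp, by linarith⟩⟩
    have hT : (min (q - 1) (dot c x₀)) ∈ Aset := by
      intro p hp
      rw [dot_fin1]
      have h1 := hz₀ p hp
      rw [dot_fin1] at h1
      have := mul_le_mul_of_nonneg_left (min_le_right (q-1) (dot c x₀)) (hall p hp)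
      linarith
    have := hlb _ hT
    have := min_le_left (q-1) (dot c x₀)
    linarith
  set Q := negR.image (fun p => p.2 / p.1 0) with hQ
  have hQne : Q.Nonempty := hneg_ne.image _
  set α := Q.max' hQne with hα
  have hαle : ∀ z ∈ Aset, α ≤ z := by
    intro z hzA
    obtain ⟨p, hpQ, hval⟩ := Finset.mem_image.mp (Q.max'_mem hQne)
    rw [Finset.mem_filter] at hpQ
    have h1 := hzA p hpQ.1
    rw [dot_fin1] at h1
    rw [hα, ← hval]
    rw [div_le_iff_of_neg hpQ.2]
    linarith
  have hαA : α ∈ Aset := by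
    intro p hp
    rw [dot_fin1]
    rcases lt_trichotomy (p.1 0) 0 with hneg | hzero | hpos
    · have hmem : p.2 / p.1 0 ∈ Q :=
        Finset.mem_image_of_mem _ (Finset.mem_filter.mpr ⟨hp, hneg⟩)
      have h1 := Finset.le_max' _ _ hmem
      have h2 : p.1 0 * α ≤ p.1 0 * (p.2 / p.1 0) :=
        mul_le_mul_of_nonpos_left h1 (le_of_lt hneg)
      rw [mul_div_cancel₀ _ (ne_of_lt hneg)] at h2
      linarith
    · have h1 := hz₀ p hp
      rw [dot_fin1] at h1
      rw [hzero] at h1 ⊢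
      linarith
    · have h1 := hαle _ hz₀
      have h2 := hz₀ p hp
      rw [dot_fin1] at h2
      nlinarith
  obtain ⟨x, hx, hcx⟩ := (hmemA α).mp hαA
  exact ⟨x, hx, fun y hy => le_trans hcx (hαle _ ((hmemA _).mpr ⟨y, hy, le_refl _⟩))⟩

end LP
/-! ## Stage 2: degree classes, transport, fiber combinatorics -/

section DegreeClasses

variable {σ : Type} [Fintype σ] {ar : σ → ℕ}

/-- Abstract iterated degree determined by a "class". -/
def classDeg {Cl : Type} (lab : Cl → Option (σ × ℚ)) (N : Cl → Multiset (Finset ℕ × Cl)) :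
    (k : ℕ) → Cl → Deg σ k
  | 0, c => lab c
  | k+1, c => (N c).map (fun p => (p.1, classDeg lab N k p.2))

lemma degV_eq_classDeg {J : Type} [Fintype J] [DecidableEq J]
    (vJ : ∀ R : σ, (Fin (ar R) → J) → ℚ) {Cl : Type}
    (cV : J → Cl) (cC : CVert σ ar J → Cl)
    (lab : Cl → Option (σ × ℚ)) (N : Cl → Multiset (Finset ℕ × Cl))
    (hlabV : ∀ u, lab (cV u) = none)
    (hlabC : ∀ c : CVert σ ar J, 0 < vJ c.1 c.2 → lab (cC c) = some (c.1, vJ c.1 c.2))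
    (hNV : ∀ u : J, (Finset.univ.filter (fun c : CVert σ ar J =>
        0 < vJ c.1 c.2 ∧ ∃ i, c.2 i = u)).val.map (fun c => (edgeLab u c, cC c)) = N (cV u))
    (hNC : ∀ c : CVert σ ar J, 0 < vJ c.1 c.2 →
        (Finset.univ.filter (fun u : J => ∃ i, c.2 i = u)).val.map
          (fun u => (edgeLab u c, cV u)) = N (cC c)) :
    ∀ k : ℕ, (∀ u : J, degV ar vJ k (Sum.inl u) = classDeg lab N k (cV u)) ∧
      (∀ c : CVert σ ar J, 0 < vJ c.1 c.2 →
        degV ar vJ k (Sum.inr c) = classDeg lab N k (cC c)) := by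
  intro k
  induction k with
  | zero =>
    refine ⟨fun u => ?_, fun c hc => ?_⟩
    · show (none : Option (σ × ℚ)) = lab (cV u)
      rw [hlabV u]
    · show some (c.1, vJ c.1 c.2) = lab (cC c)
      rw [hlabC c hc]
  | succ k ih =>
    refine ⟨fun u => ?_, fun c hc => ?_⟩
    · show (Finset.univ.filter (fun c : CVert σ ar J =>
          0 < vJ c.1 c.2 ∧ ∃ i, c.2 i = u)).val.map
          (fun c => (edgeLab u c, degV ar vJ k (Sum.inr c)))
        = (N (cV u)).map (fun p => (p.1, classDeg lab N k p.2))
      rw [← hNV u, Multiset.map_map]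
      apply Multiset.map_congr rfl
      intro c hc
      have hpos := (Finset.mem_filter.mp (Finset.mem_val.mp hc)).2.1
      simp only [Function.comp_apply]
      rw [(ih.2) c hpos]
    · show (Finset.univ.filter (fun u : J => ∃ i, c.2 i = u)).val.map
          (fun u => (edgeLab u c, degV ar vJ k (Sum.inl u)))
        = (N (cC c)).map (fun p => (p.1, classDeg lab N k p.2))
      rw [← hNC c hc, Multiset.map_map]
      apply Multiset.map_congr rfl
      intro u _
      simp only [Function.comp_apply]
      rw [(ih.1) u]

lemma degSeq_eq_classMul {J : Type} [Fintype J] [DecidableEq J]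
    (vJ : ∀ R : σ, (Fin (ar R) → J) → ℚ) {Cl : Type}
    (cV : J → Cl) (cC : CVert σ ar J → Cl)
    (lab : Cl → Option (σ × ℚ)) (N : Cl → Multiset (Finset ℕ × Cl))
    (hlabV : ∀ u, lab (cV u) = none)
    (hlabC : ∀ c : CVert σ ar J, 0 < vJ c.1 c.2 → lab (cC c) = some (c.1, vJ c.1 c.2))
    (hNV : ∀ u : J, (Finset.univ.filter (fun c : CVert σ ar J =>
        0 < vJ c.1 c.2 ∧ ∃ i, c.2 i = u)).val.map (fun c => (edgeLab u c, cC c)) = N (cV u))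
    (hNC : ∀ c : CVert σ ar J, 0 < vJ c.1 c.2 →
        (Finset.univ.filter (fun u : J => ∃ i, c.2 i = u)).val.map
          (fun u => (edgeLab u c, cV u)) = N (cC c)) :
    degSeq ar vJ = (Finset.univ.val.map cV
        + (Finset.univ.filter (fun c : CVert σ ar J => 0 < vJ c.1 c.2)).val.map cC).map
      (fun cl => (fun k => classDeg lab N k cl : IterDeg σ)) := by
  have h := degV_eq_classDeg vJ cV cC lab N hlabV hlabC hNV hNC
  unfold degSeq
  rw [Multiset.map_add, Multiset.map_map, Multiset.map_map]
  congr 1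
  · apply Multiset.map_congr rfl
    intro u _
    funext k
    exact (h k).1 u
  · apply Multiset.map_congr rfl
    intro c hc
    have hpos := (Finset.mem_filter.mp (Finset.mem_val.mp hc)).2
    funext k
    exact (h k).2 c hpos

end DegreeClasses

section Transport

variable {σ : Type} [Fintype σ] {ar : σ → ℕ} {K J : Type} [Fintype K] [DecidableEq K]
  [Fintype J] [DecidableEq J]

/-- Transport of constraint vertices along an equivalence of universes. -/
def cvMap (e : K ≃ J) : CVert σ ar K → CVert σ ar J := fun c => ⟨c.1, fun i => e (c.2 i)⟩

lemma cvMap_injective (e : K ≃ J) : Function.Injective (cvMap (σ := σ) (ar := ar) e) := by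
  rintro ⟨R, t⟩ ⟨R', t'⟩ h
  simp only [cvMap, Sigma.mk.inj_iff] at h
  obtain ⟨rfl, h2⟩ := h
  have h3 : (fun i => e (t i)) = (fun i => e (t' i)) := eq_of_heq h2
  have h4 : t = t' := funext fun i => e.injective (congrFun h3 i)
  rw [h4]

lemma edgeLab_cvMap (e : K ≃ J) (u : K) (c : CVert σ ar K) :
    edgeLab (e u) (cvMap e c) = edgeLab u c := by
  unfold edgeLab cvMap
  congr 1
  apply Finset.filter_congr
  intro i _
  simp

lemma degV_transport (e : K ≃ J) (vJ : ∀ R : σ, (Fin (ar R) → J) → ℚ) :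
    ∀ k : ℕ, (∀ u : K, degV ar (fun R t => vJ R (fun i => e (t i))) k (Sum.inl u)
        = degV ar vJ k (Sum.inl (e u))) ∧
      (∀ c : CVert σ ar K, degV ar (fun R t => vJ R (fun i => e (t i))) k (Sum.inr c)
        = degV ar vJ k (Sum.inr (cvMap e c))) := by
  intro k
  induction k with
  | zero => exact ⟨fun u => rfl, fun c => rfl⟩
  | succ k ih =>
    refine ⟨fun u => ?_, fun c => ?_⟩
    · show (Finset.univ.filter (fun c : CVert σ ar K =>
          0 < vJ c.1 (fun i => e (c.2 i)) ∧ ∃ i, c.2 i = u)).val.map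
            (fun c => (edgeLab u c, degV ar (fun R t => vJ R (fun i => e (t i))) k (Sum.inr c)))
        = (Finset.univ.filter (fun c' : CVert σ ar J =>
          0 < vJ c'.1 c'.2 ∧ ∃ i, c'.2 i = e u)).val.map
            (fun c' => (edgeLab (e u) c', degV ar vJ k (Sum.inr c')))
      have hfil : Finset.univ.filter (fun c' : CVert σ ar J =>
            0 < vJ c'.1 c'.2 ∧ ∃ i, c'.2 i = e u)
          = (Finset.univ.filter (fun c : CVert σ ar K =>
            0 < vJ c.1 (fun i => e (c.2 i)) ∧ ∃ i, c.2 i = u)).map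
              ⟨cvMap e, cvMap_injective e⟩ := by
        ext c'
        simp only [Finset.mem_map, Finset.mem_filter, Finset.mem_univ, true_and,
          Function.Embedding.coeFn_mk]
        constructor
        · rintro ⟨hpos, i, hi⟩
          refine ⟨⟨c'.1, fun j => e.symm (c'.2 j)⟩, ⟨?_, ⟨i, ?_⟩⟩, ?_⟩
          · show 0 < vJ c'.1 (fun j => e (e.symm (c'.2 j)))
            simpa using hpos
          · show e.symm (c'.2 i) = u
            rw [hi, Equiv.symm_apply_apply]
          · show (⟨c'.1, fun j => e (e.symm (c'.2 j))⟩ : CVert σ ar J) = c'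
            have : (fun j => e (e.symm (c'.2 j))) = c'.2 := by
              funext j; rw [Equiv.apply_symm_apply]
            rw [this]
        · rintro ⟨c, ⟨hpos, i, hi⟩, rfl⟩
          refine ⟨hpos, ⟨i, ?_⟩⟩
          show e (c.2 i) = e u
          rw [hi]
      rw [hfil, Finset.map_val, Multiset.map_map]
      apply Multiset.map_congr rfl
      intro c hc
      simp only [Function.comp_apply, Function.Embedding.coeFn_mk]
      rw [edgeLab_cvMap, ← (ih.2) c]
    · show (Finset.univ.filter (fun u : K => ∃ i, c.2 i = u)).val.map
            (fun u => (edgeLab u c, degV ar (fun R t => vJ R (fun i => e (t i))) k (Sum.inl u)))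
        = (Finset.univ.filter (fun u' : J => ∃ i, (cvMap (σ := σ) (ar := ar) e c).2 i = u')).val.map
            (fun u' => (edgeLab u' (cvMap e c), degV ar vJ k (Sum.inl u')))
      have hfil : Finset.univ.filter (fun u' : J => ∃ i, (cvMap (σ := σ) (ar := ar) e c).2 i = u')
          = (Finset.univ.filter (fun u : K => ∃ i, c.2 i = u)).map e.toEmbedding := by
        ext u'
        simp only [Finset.mem_map, Finset.mem_filter, Finset.mem_univ, true_and,
          Equiv.coe_toEmbedding]
        constructor
        · rintro ⟨i, hi⟩
          refine ⟨e.symm u', ⟨i, ?_⟩, by rw [Equiv.apply_symm_apply]⟩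
          rw [← hi]
          exact (Equiv.symm_apply_apply e (c.2 i)).symm
        · rintro ⟨u, ⟨i, hi⟩, rfl⟩
          exact ⟨i, by show e (c.2 i) = e u; rw [hi]⟩
      rw [hfil, Finset.map_val, Multiset.map_map]
      apply Multiset.map_congr rfl
      intro u hu
      simp only [Function.comp_apply, Equiv.coe_toEmbedding]
      rw [edgeLab_cvMap, ← (ih.1) u]

lemma degSeq_transport (e : K ≃ J) (vJ : ∀ R : σ, (Fin (ar R) → J) → ℚ) :
    degSeq ar (fun R t => vJ R (fun i => e (t i))) = degSeq ar vJ := by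
  have h := degV_transport (σ := σ) (ar := ar) e vJ
  unfold degSeq
  congr 1
  · rw [← Finset.map_univ_equiv e, Finset.map_val, Multiset.map_map]
    apply Multiset.map_congr rfl
    intro u _
    simp only [Function.comp_apply, Equiv.coe_toEmbedding]
    funext k
    exact (h k).1 u
  · have hfil : Finset.univ.filter (fun c' : CVert σ ar J => 0 < vJ c'.1 c'.2)
        = (Finset.univ.filter (fun c : CVert σ ar K =>
            0 < vJ c.1 (fun i => e (c.2 i)))).map ⟨cvMap e, cvMap_injective e⟩ := by
      ext c'
      simp only [Finset.mem_map, Finset.mem_filter, Finset.mem_univ, true_and,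
        Function.Embedding.coeFn_mk]
      constructor
      · intro hpos
        refine ⟨⟨c'.1, fun j => e.symm (c'.2 j)⟩, ?_, ?_⟩
        · show 0 < vJ c'.1 (fun j => e (e.symm (c'.2 j)))
          simpa using hpos
        · show (⟨c'.1, fun j => e (e.symm (c'.2 j))⟩ : CVert σ ar J) = c'
          have : (fun j => e (e.symm (c'.2 j))) = c'.2 := by
            funext j; rw [Equiv.apply_symm_apply]
          rw [this]
      · rintro ⟨c, hpos, rfl⟩
        exact hpos
    rw [hfil, Finset.map_val, Multiset.map_map]
    apply Multiset.map_congr rfl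
    intro c hc
    simp only [Function.comp_apply, Function.Embedding.coeFn_mk]
    funext k
    exact (h k).2 c

end Transport

section FiberCombinatorics

lemma card_sigma_fiber {α : Type} [Fintype α] [DecidableEq α] (w : α → ℕ) (a : α) :
    (Finset.univ.filter (fun s : Σ a' : α, Fin (w a') => s.1 = a)).card = w a := by
  rw [Finset.card_filter, ← Finset.univ_sigma_univ, Finset.sum_sigma]
  have h1 : ∀ a' : α, (∑ x : Fin (w a'), if (⟨a', x⟩ : Σ a' : α, Fin (w a')).1 = a then 1 else 0)
      = if a' = a then w a' else 0 := by
    intro a'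
    split_ifs with h
    · simp [h]
    · simp [h]
  rw [Finset.sum_congr rfl (fun a' _ => h1 a')]
  rw [Finset.sum_ite_eq' Finset.univ a (fun a' => w a')]
  simp

lemma exists_fiber_fun {α : Type} [Fintype α] [DecidableEq α] (w : α → ℕ) (m : ℕ)
    (h : ∑ a, w a = m) :
    ∃ f : Fin m → α, ∀ a, (Finset.univ.filter (fun ℓ => f ℓ = a)).card = w a := by
  have hcard : Fintype.card (Σ a : α, Fin (w a)) = m := by
    simp [Fintype.card_sigma, h]
  set E := Fintype.equivFinOfCardEq hcard with hE
  refine ⟨fun ℓ => (E.symm ℓ).1, fun a => ?_⟩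
  have hbij : (Finset.univ.filter (fun ℓ : Fin m => (E.symm ℓ).1 = a)).card
      = (Finset.univ.filter (fun s : Σ a' : α, Fin (w a') => s.1 = a)).card := by
    apply Finset.card_bij (fun ℓ _ => E.symm ℓ)
    · intro ℓ hℓ
      simp only [Finset.mem_filter, Finset.mem_univ, true_and] at hℓ ⊢
      exact hℓ
    · intro ℓ₁ h₁ ℓ₂ h₂ hEq
      exact E.symm.injective hEq
    · intro s hs
      refine ⟨E s, ?_, by simp⟩
      simp only [Finset.mem_filter, Finset.mem_univ, true_and] at hs ⊢
      simpa using hs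
  rw [hbij, card_sigma_fiber]

lemma exists_perm_comp {m : ℕ} {α : Type} [Fintype α] [DecidableEq α] (f₁ f₂ : Fin m → α)
    (h : ∀ a, (Finset.univ.filter (fun ℓ => f₁ ℓ = a)).card
        = (Finset.univ.filter (fun ℓ => f₂ ℓ = a)).card) :
    ∃ e : Equiv.Perm (Fin m), ∀ ℓ, f₁ (e ℓ) = f₂ ℓ := by
  have hfib : ∀ a : α, Fintype.card {x // f₂ x = a} = Fintype.card {x // f₁ x = a} := by
    intro a
    rw [Fintype.card_subtype, Fintype.card_subtype]
    exact (h a).symm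
  set F : ∀ a : α, {x // f₂ x = a} ≃ {x // f₁ x = a} := fun a => Fintype.equivOfCardEq (hfib a)
  set E₁ := Equiv.sigmaFiberEquiv f₁
  set E₂ := Equiv.sigmaFiberEquiv f₂
  refine ⟨(E₂.symm.trans (Equiv.sigmaCongrRight F)).trans E₁, fun ℓ => ?_⟩
  set s : Σ a : α, {x // f₁ x = a} := (Equiv.sigmaCongrRight F) (E₂.symm ℓ) with hsdef
  have h2 : s = ⟨f₂ ℓ, F (f₂ ℓ) ⟨ℓ, rfl⟩⟩ := rfl
  have h4 : f₁ (E₁ s) = s.1 := s.2.2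
  calc f₁ (((E₂.symm.trans (Equiv.sigmaCongrRight F)).trans E₁) ℓ) = f₁ (E₁ s) := rfl
    _ = s.1 := h4
    _ = f₂ ℓ := by rw [h2]

lemma exists_nat_cast_mul (q : ℚ) (hq : 0 ≤ q) (m : ℕ) (hd : (q.den : ℕ) ∣ m) :
    ∃ k : ℕ, (k : ℚ) = m * q := by
  obtain ⟨c, rfl⟩ := hd
  have hne : (q.den : ℚ) ≠ 0 := by
    exact_mod_cast q.den_nz
  have h1 : (q.den : ℚ) * q = (q.num : ℚ) := by
    rw [mul_comm]
    exact Rat.mul_den_eq_num q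
  have hnum : ((q.num.toNat : ℕ) : ℚ) = (q.num : ℚ) := by
    exact_mod_cast Int.toNat_of_nonneg (Rat.num_nonneg.mpr hq)
  refine ⟨q.num.toNat * c, ?_⟩
  push_cast
  rw [hnum, ← h1]
  ring

end FiberCombinatorics

/-! ## Stage 3: encoding `SA¹(I,A)` as a finite linear program -/

lemma dot_addRow {ι : Type} [Fintype ι] (f g x : ι → ℚ) :
    LP.dot (fun w => f w + g w) x = LP.dot f x + LP.dot g x := by
  unfold LP.dot
  rw [← Finset.sum_add_distrib]
  exact Finset.sum_congr rfl (fun i _ => by ring)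

section SAEncoding

variable {σ : Type} [Fintype σ] (ar : σ → ℕ) (I : Type) [Fintype I] [DecidableEq I]
  (A : Type) [Fintype A] [DecidableEq A]

/-- The index type of LP variables: `pv`-variables and `pc`-variables. -/
abbrev WVar := (I × A) ⊕ (Σ R : σ, (Fin (ar R) → I) × (Fin (ar R) → A))

/-- An "indicator row" supported on the image of `ι`. -/
noncomputable def indRow (cst : ℚ) {γ : Type} (s : Finset γ) (ι : γ → WVar ar I A) : WVar ar I A → ℚ :=
  fun w => if ∃ g ∈ s, ι g = w then cst else 0

lemma dot_indRow (cst : ℚ) {γ : Type} (s : Finset γ) (ι : γ → WVar ar I A)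
    (hι : Set.InjOn ι s) (x : WVar ar I A → ℚ) :
    LP.dot (indRow ar I A cst s ι) x = cst * ∑ g ∈ s, x (ι g) := by
  unfold LP.dot indRow
  have h1 : ∀ w : WVar ar I A, (if ∃ g ∈ s, ι g = w then cst else 0) * x w
      = if w ∈ s.image ι then cst * x w else 0 := by
    intro w
    by_cases h : ∃ g ∈ s, ι g = w
    · rw [if_pos h, if_pos (Finset.mem_image.mpr h)]
    · rw [if_neg h, if_neg (fun hc => h (Finset.mem_image.mp hc)), zero_mul]
  rw [Finset.sum_congr rfl (fun w _ => h1 w), Finset.sum_ite_mem,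
    Finset.univ_inter, Finset.sum_image (fun a ha b hb hab => hι ha hb hab),
    Finset.mul_sum]

variable (vI : ∀ R : σ, (Fin (ar R) → I) → ℚ)
  (vA : ∀ R : σ, (Fin (ar R) → A) → WithTop ℚ)

/-- Shorthand for the sigma index of `pc`-variables. -/
abbrev SIA := Σ R : σ, (Fin (ar R) → I) × (Fin (ar R) → A)

noncomputable def rowNN (s : SIA ar I A) : (WVar ar I A → ℚ) × ℚ :=
  (indRow ar I A (-1) {s} Sum.inr, 0)

noncomputable def rowSumLe (u : I) : (WVar ar I A → ℚ) × ℚ :=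
  (indRow ar I A 1 Finset.univ (fun a : A => Sum.inl (u, a)), 1)

noncomputable def rowSumGe (u : I) : (WVar ar I A → ℚ) × ℚ :=
  (indRow ar I A (-1) Finset.univ (fun a : A => Sum.inl (u, a)), -1)

noncomputable def rowMargLe (p : (Σ R : σ, (Fin (ar R) → I) × Fin (ar R)) × A) : (WVar ar I A → ℚ) × ℚ :=
  (fun w => indRow ar I A 1 {(p.1.2.1 p.1.2.2, p.2)} Sum.inl w
    + indRow ar I A (-1)
        (Finset.univ.filter (fun t : Fin (ar p.1.1) → A => t p.1.2.2 = p.2))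
        (fun t => Sum.inr ⟨p.1.1, (p.1.2.1, t)⟩) w, 0)

noncomputable def rowMargGe (p : (Σ R : σ, (Fin (ar R) → I) × Fin (ar R)) × A) : (WVar ar I A → ℚ) × ℚ :=
  (fun w => indRow ar I A (-1) {(p.1.2.1 p.1.2.2, p.2)} Sum.inl w
    + indRow ar I A 1
        (Finset.univ.filter (fun t : Fin (ar p.1.1) → A => t p.1.2.2 = p.2))
        (fun t => Sum.inr ⟨p.1.1, (p.1.2.1, t)⟩) w, 0)

noncomputable def rowZero (s : SIA ar I A) : (WVar ar I A → ℚ) × ℚ :=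
  (indRow ar I A 1 {s} Sum.inr, 0)

noncomputable def rowsSA : Finset ((WVar ar I A → ℚ) × ℚ) :=
  ((Finset.univ : Finset (SIA ar I A)).filter (fun s => 0 < vI s.1 s.2.1)).image (rowNN ar I A)
  ∪ (Finset.univ : Finset I).image (rowSumLe ar I A)
  ∪ (Finset.univ : Finset I).image (rowSumGe ar I A)
  ∪ ((Finset.univ : Finset ((Σ R : σ, (Fin (ar R) → I) × Fin (ar R)) × A)).filter
      (fun p => 0 < vI p.1.1 p.1.2.1)).image (rowMargLe ar I A)
  ∪ ((Finset.univ : Finset ((Σ R : σ, (Fin (ar R) → I) × Fin (ar R)) × A)).filter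
      (fun p => 0 < vI p.1.1 p.1.2.1)).image (rowMargGe ar I A)
  ∪ ((Finset.univ : Finset (SIA ar I A)).filter
      (fun s => 0 < vI s.1 s.2.1 ∧ vA s.1 s.2.2 = ⊤)).image (rowZero ar I A)
  ∪ ((Finset.univ : Finset (SIA ar I A)).filter
      (fun s => 0 < vI s.1 s.2.1 ∧ ∃ i j, s.2.1 i = s.2.1 j ∧ s.2.2 i ≠ s.2.2 j)).image
      (rowZero ar I A)

lemma dot_rowNN (s : SIA ar I A) (x : WVar ar I A → ℚ) :
    LP.dot (rowNN ar I A s).1 x = -(x (Sum.inr s)) := by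
  unfold rowNN
  rw [dot_indRow ar I A (-1) _ _ (Set.injOn_of_injective Sum.inr_injective) x,
    Finset.sum_singleton]
  ring

lemma dot_rowZero (s : SIA ar I A) (x : WVar ar I A → ℚ) :
    LP.dot (rowZero ar I A s).1 x = x (Sum.inr s) := by
  unfold rowZero
  rw [dot_indRow ar I A 1 _ _ (Set.injOn_of_injective Sum.inr_injective) x,
    Finset.sum_singleton, one_mul]

lemma dot_rowSumLe (u : I) (x : WVar ar I A → ℚ) :
    LP.dot (rowSumLe ar I A u).1 x = ∑ a : A, x (Sum.inl (u, a)) := by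
  unfold rowSumLe
  rw [dot_indRow ar I A 1 _ _ ?_ x, one_mul]
  intro a _ b _ hab
  simpa using hab

lemma dot_rowSumGe (u : I) (x : WVar ar I A → ℚ) :
    LP.dot (rowSumGe ar I A u).1 x = -∑ a : A, x (Sum.inl (u, a)) := by
  unfold rowSumGe
  rw [dot_indRow ar I A (-1) _ _ ?_ x]
  · ring
  intro a _ b _ hab
  simpa using hab

lemma inr_sigma_injOn (R : σ) (v : Fin (ar R) → I) (s : Finset (Fin (ar R) → A)) :
    Set.InjOn (fun t : Fin (ar R) → A => (Sum.inr ⟨R, (v, t)⟩ : WVar ar I A)) s := by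
  intro t1 _ t2 _ h
  simp only [Sum.inr.injEq, Sigma.mk.inj_iff, heq_eq_eq, Prod.mk.injEq, true_and] at h
  exact h

lemma dot_rowMargLe (p : (Σ R : σ, (Fin (ar R) → I) × Fin (ar R)) × A) (x : WVar ar I A → ℚ) :
    LP.dot (rowMargLe ar I A p).1 x = x (Sum.inl (p.1.2.1 p.1.2.2, p.2))
      - ∑ t ∈ Finset.univ.filter (fun t : Fin (ar p.1.1) → A => t p.1.2.2 = p.2),
          x (Sum.inr ⟨p.1.1, (p.1.2.1, t)⟩) := by
  unfold rowMargLe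
  rw [dot_addRow,
    dot_indRow ar I A 1 _ _ (Set.injOn_of_injective Sum.inl_injective) x,
    dot_indRow ar I A (-1) _ _ (inr_sigma_injOn ar I A _ _ _) x,
    Finset.sum_singleton]
  ring

lemma dot_rowMargGe (p : (Σ R : σ, (Fin (ar R) → I) × Fin (ar R)) × A) (x : WVar ar I A → ℚ) :
    LP.dot (rowMargGe ar I A p).1 x = - x (Sum.inl (p.1.2.1 p.1.2.2, p.2))
      + ∑ t ∈ Finset.univ.filter (fun t : Fin (ar p.1.1) → A => t p.1.2.2 = p.2),
          x (Sum.inr ⟨p.1.1, (p.1.2.1, t)⟩) := by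
  unfold rowMargGe
  rw [dot_addRow,
    dot_indRow ar I A (-1) _ _ (Set.injOn_of_injective Sum.inl_injective) x,
    dot_indRow ar I A 1 _ _ (inr_sigma_injOn ar I A _ _ _) x,
    Finset.sum_singleton]
  ring

/-- Recover the `pv` part. -/
def PVx (x : WVar ar I A → ℚ) : I → A → ℚ := fun u a => x (Sum.inl (u, a))

/-- Recover the `pc` part. -/
def PCx (x : WVar ar I A → ℚ) :
    ∀ R : σ, (Fin (ar R) → I) → (Fin (ar R) → A) → ℚ :=
  fun R v t => x (Sum.inr ⟨R, (v, t)⟩)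

/-- Package `(pv, pc)` as a vector. -/
def toWvec (pv : I → A → ℚ)
    (pc : ∀ R : σ, (Fin (ar R) → I) → (Fin (ar R) → A) → ℚ) : WVar ar I A → ℚ :=
  Sum.elim (fun p => pv p.1 p.2) (fun s => pc s.1 s.2.1 s.2.2)

lemma toWvec_PV_PC (x : WVar ar I A → ℚ) : toWvec ar I A (PVx ar I A x) (PCx ar I A x) = x := by
  funext w
  cases w with
  | inl p => rfl
  | inr s => rfl

lemma feas_iff_SA1 (x : WVar ar I A → ℚ) :
    LP.Feas (rowsSA ar I A vI vA) x ↔ SA1Feas ar vI vA (PVx ar I A x) (PCx ar I A x) := by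
  constructor
  · intro hF
    have hNN : ∀ s : SIA ar I A, 0 < vI s.1 s.2.1 → 0 ≤ x (Sum.inr s) := by
      intro s hs
      have hm : rowNN ar I A s ∈ rowsSA ar I A vI vA := by
        unfold rowsSA
        refine Finset.mem_union_left _ (Finset.mem_union_left _ (Finset.mem_union_left _
          (Finset.mem_union_left _ (Finset.mem_union_left _ (Finset.mem_union_left _
          (Finset.mem_image_of_mem _ (Finset.mem_filter.mpr ⟨Finset.mem_univ _, hs⟩)))))))
      have := hF _ hm
      rw [dot_rowNN] at this
      have h2 : (rowNN ar I A s).2 = 0 := rfl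
      rw [h2] at this
      linarith
    have hSum : ∀ u : I, ∑ a : A, x (Sum.inl (u, a)) = 1 := by
      intro u
      have hmLe : rowSumLe ar I A u ∈ rowsSA ar I A vI vA := by
        unfold rowsSA
        refine Finset.mem_union_left _ (Finset.mem_union_left _ (Finset.mem_union_left _
          (Finset.mem_union_left _ (Finset.mem_union_left _ (Finset.mem_union_right _
          (Finset.mem_image_of_mem _ (Finset.mem_univ _)))))))
      have hmGe : rowSumGe ar I A u ∈ rowsSA ar I A vI vA := by
        unfold rowsSA
        refine Finset.mem_union_left _ (Finset.mem_union_left _ (Finset.mem_union_left _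
          (Finset.mem_union_left _ (Finset.mem_union_right _
          (Finset.mem_image_of_mem _ (Finset.mem_univ _))))))
      have h1 := hF _ hmLe
      have h2 := hF _ hmGe
      rw [dot_rowSumLe] at h1
      rw [dot_rowSumGe] at h2
      have e1 : (rowSumLe ar I A u).2 = 1 := rfl
      have e2 : (rowSumGe ar I A u).2 = -1 := rfl
      rw [e1] at h1
      rw [e2] at h2
      linarith
    have hMarg : ∀ (R : σ) (v : Fin (ar R) → I), 0 < vI R v → ∀ (i : Fin (ar R)) (a : A),
        x (Sum.inl (v i, a)) = ∑ t ∈ Finset.univ.filter (fun t : Fin (ar R) → A => t i = a),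
          x (Sum.inr ⟨R, (v, t)⟩) := by
      intro R v hv i a
      set p : (Σ R : σ, (Fin (ar R) → I) × Fin (ar R)) × A := (⟨R, (v, i)⟩, a) with hp
      have hmLe : rowMargLe ar I A p ∈ rowsSA ar I A vI vA := by
        unfold rowsSA
        refine Finset.mem_union_left _ (Finset.mem_union_left _ (Finset.mem_union_left _
          (Finset.mem_union_right _
          (Finset.mem_image_of_mem _ (Finset.mem_filter.mpr ⟨Finset.mem_univ _, hv⟩)))))
      have hmGe : rowMargGe ar I A p ∈ rowsSA ar I A vI vA := by
        unfold rowsSA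
        refine Finset.mem_union_left _ (Finset.mem_union_left _ (Finset.mem_union_right _
          (Finset.mem_image_of_mem _ (Finset.mem_filter.mpr ⟨Finset.mem_univ _, hv⟩))))
      have h1 := hF _ hmLe
      have h2 := hF _ hmGe
      rw [dot_rowMargLe] at h1
      rw [dot_rowMargGe] at h2
      have e1 : (rowMargLe ar I A p).2 = 0 := rfl
      have e2 : (rowMargGe ar I A p).2 = 0 := rfl
      rw [e1] at h1
      rw [e2] at h2
      have : x (Sum.inl (p.1.2.1 p.1.2.2, p.2))
          = ∑ t ∈ Finset.univ.filter (fun t : Fin (ar p.1.1) → A => t p.1.2.2 = p.2),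
            x (Sum.inr ⟨p.1.1, (p.1.2.1, t)⟩) := by linarith
      exact this
    have hTop : ∀ s : SIA ar I A, 0 < vI s.1 s.2.1 → vA s.1 s.2.2 = ⊤ →
        x (Sum.inr s) = 0 := by
      intro s hs htop
      have hm : rowZero ar I A s ∈ rowsSA ar I A vI vA := by
        unfold rowsSA
        refine Finset.mem_union_left _ (Finset.mem_union_right _
          (Finset.mem_image_of_mem _ (Finset.mem_filter.mpr ⟨Finset.mem_univ _, hs, htop⟩)))
      have h1 := hF _ hm
      rw [dot_rowZero] at h1
      have e1 : (rowZero ar I A s).2 = 0 := rfl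
      rw [e1] at h1
      exact le_antisymm h1 (hNN s hs)
    have hSA : ∀ s : SIA ar I A, 0 < vI s.1 s.2.1 →
        (∃ i j, s.2.1 i = s.2.1 j ∧ s.2.2 i ≠ s.2.2 j) → x (Sum.inr s) = 0 := by
      intro s hs hcol
      have hm : rowZero ar I A s ∈ rowsSA ar I A vI vA := by
        unfold rowsSA
        exact Finset.mem_union_right _
          (Finset.mem_image_of_mem _ (Finset.mem_filter.mpr ⟨Finset.mem_univ _, hs, hcol⟩))
      have h1 := hF _ hm
      rw [dot_rowZero] at h1
      have e1 : (rowZero ar I A s).2 = 0 := rfl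
      rw [e1] at h1
      exact le_antisymm h1 (hNN s hs)
    refine ⟨⟨?_, ?_, ?_, ?_⟩, ?_⟩
    · intro R v t hv
      exact hNN ⟨R, (v, t)⟩ hv
    · intro u
      exact hSum u
    · intro R v hv i a
      exact hMarg R v hv i a
    · intro R v hv t htop
      exact hTop ⟨R, (v, t)⟩ hv htop
    · intro R v hv t hcol
      exact hSA ⟨R, (v, t)⟩ hv hcol
  · intro hS
    obtain ⟨⟨h1, h2, h3, h4⟩, h5⟩ := hS
    intro r hr
    unfold rowsSA at hr
    simp only [Finset.mem_union] at hr
    rcases hr with ((((((hr | hr) | hr) | hr) | hr) | hr) | hr) <;>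
      rw [Finset.mem_image] at hr <;> obtain ⟨g, hg, rfl⟩ := hr
    · rw [Finset.mem_filter] at hg
      show LP.dot (rowNN ar I A g).1 x ≤ (rowNN ar I A g).2
      rw [dot_rowNN]
      have := h1 g.1 g.2.1 g.2.2 hg.2
      show -(x (Sum.inr g)) ≤ 0
      have e : x (Sum.inr g) = PCx ar I A x g.1 g.2.1 g.2.2 := rfl
      rw [e]
      linarith
    · show LP.dot (rowSumLe ar I A g).1 x ≤ (rowSumLe ar I A g).2
      rw [dot_rowSumLe]
      show _ ≤ (1 : ℚ)
      rw [show (∑ a : A, x (Sum.inl (g, a))) = ∑ a : A, PVx ar I A x g a from rfl, h2 g]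
    · show LP.dot (rowSumGe ar I A g).1 x ≤ (rowSumGe ar I A g).2
      rw [dot_rowSumGe]
      show _ ≤ (-1 : ℚ)
      rw [show (∑ a : A, x (Sum.inl (g, a))) = ∑ a : A, PVx ar I A x g a from rfl, h2 g]
    · rw [Finset.mem_filter] at hg
      show LP.dot (rowMargLe ar I A g).1 x ≤ (rowMargLe ar I A g).2
      rw [dot_rowMargLe]
      show _ ≤ (0 : ℚ)
      have := h3 g.1.1 g.1.2.1 hg.2 g.1.2.2 g.2
      have e : x (Sum.inl (g.1.2.1 g.1.2.2, g.2)) = PVx ar I A x (g.1.2.1 g.1.2.2) g.2 := rfl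
      rw [e, this]
      have e2 : ∀ t, x (Sum.inr ⟨g.1.1, (g.1.2.1, t)⟩) = PCx ar I A x g.1.1 g.1.2.1 t :=
        fun t => rfl
      simp only [e2]
      linarith
    · rw [Finset.mem_filter] at hg
      show LP.dot (rowMargGe ar I A g).1 x ≤ (rowMargGe ar I A g).2
      rw [dot_rowMargGe]
      show _ ≤ (0 : ℚ)
      have := h3 g.1.1 g.1.2.1 hg.2 g.1.2.2 g.2
      have e : x (Sum.inl (g.1.2.1 g.1.2.2, g.2)) = PVx ar I A x (g.1.2.1 g.1.2.2) g.2 := rfl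
      rw [e, this]
      have e2 : ∀ t, x (Sum.inr ⟨g.1.1, (g.1.2.1, t)⟩) = PCx ar I A x g.1.1 g.1.2.1 t :=
        fun t => rfl
      simp only [e2]
      linarith
    · rw [Finset.mem_filter] at hg
      show LP.dot (rowZero ar I A g).1 x ≤ (rowZero ar I A g).2
      rw [dot_rowZero]
      show _ ≤ (0 : ℚ)
      have := h4 g.1 g.2.1 hg.2.1 g.2.2 hg.2.2
      have e : x (Sum.inr g) = PCx ar I A x g.1 g.2.1 g.2.2 := rfl
      rw [e, this]
    · rw [Finset.mem_filter] at hg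
      show LP.dot (rowZero ar I A g).1 x ≤ (rowZero ar I A g).2
      rw [dot_rowZero]
      show _ ≤ (0 : ℚ)
      have := h5 g.1 g.2.1 hg.2.1 g.2.2 hg.2.2
      have e : x (Sum.inr g) = PCx ar I A x g.1 g.2.1 g.2.2 := rfl
      rw [e, this]

end SAEncoding
/-! ## Stage 3b: objective value and existence of an optimal SA¹ solution -/

lemma toE_coe_mono {q₁ q₂ : ℚ} (h : q₁ ≤ q₂) : toE (q₁ : WithTop ℚ) ≤ toE (q₂ : WithTop ℚ) := by
  show ((q₁ : ℝ) : EReal) ≤ ((q₂ : ℝ) : EReal)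
  exact EReal.coe_le_coe_iff.mpr (by exact_mod_cast h)

lemma toE_top : toE (⊤ : WithTop ℚ) = ⊤ := rfl

lemma toE_mono {x y : WithTop ℚ} (h : x ≤ y) : toE x ≤ toE y := by
  cases y with
  | top => rw [toE_top]; exact le_top
  | coe q =>
    cases x with
    | top => exact absurd h (by simp)
    | coe q' => exact toE_coe_mono (WithTop.coe_le_coe.mp h)

section Objective

variable {σ : Type} [Fintype σ] (ar : σ → ℕ) (I : Type) [Fintype I] [DecidableEq I]
  (A : Type) [Fintype A] [DecidableEq A]
  (vI : ∀ R : σ, (Fin (ar R) → I) → ℚ)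
  (vA : ∀ R : σ, (Fin (ar R) → A) → WithTop ℚ)

/-- The objective vector of the linear program. -/
noncomputable def objC : WVar ar I A → ℚ :=
  Sum.elim (fun _ => 0) (fun s => if 0 < vI s.1 s.2.1 ∧ vA s.1 s.2.2 ≠ ⊤
    then vI s.1 s.2.1 * (vA s.1 s.2.2).untopD 0 else 0)

lemma objVal_eq_dot (hnn : NNeg ar vI) (pv : I → A → ℚ)
    (pc : ∀ R : σ, (Fin (ar R) → I) → (Fin (ar R) → A) → ℚ)
    (hfeas : SA1Feas ar vI vA pv pc) :
    objVal ar vI vA pc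
      = ((LP.dot (objC ar I A vI vA) (toWvec ar I A pv pc) : ℚ) : WithTop ℚ) := by
  have hterm : ∀ (R : σ) (v : Fin (ar R) → I) (t : Fin (ar R) → A),
      ((pc R v t : WithTop ℚ) * ((vI R v : WithTop ℚ) * vA R t))
        = ((objC ar I A vI vA (Sum.inr ⟨R, (v, t)⟩) * pc R v t : ℚ) : WithTop ℚ) := by
    intro R v t
    rcases eq_or_lt_of_le (hnn R v) with hz | hp
    · have e1 : objC ar I A vI vA (Sum.inr ⟨R, (v, t)⟩) = 0 := by
        show (if 0 < vI R v ∧ vA R t ≠ ⊤ then vI R v * (vA R t).untopD 0 else 0) = 0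
        rw [if_neg]
        rintro ⟨h, -⟩
        rw [← hz] at h
        exact lt_irrefl 0 h
      rw [e1, zero_mul, ← hz]
      show (↑(pc R v t) : WithTop ℚ) * (((0 : ℚ) : WithTop ℚ) * vA R t) = ((0 : ℚ) : WithTop ℚ)
      simp
    · by_cases htop : vA R t = ⊤
      · have hpc0 : pc R v t = 0 := hfeas.1.2.2.2 R v hp t htop
        have e1 : objC ar I A vI vA (Sum.inr ⟨R, (v, t)⟩) = 0 := by
          show (if 0 < vI R v ∧ vA R t ≠ ⊤ then vI R v * (vA R t).untopD 0 else 0) = 0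
          rw [if_neg]
          rintro ⟨-, h⟩
          exact h htop
        rw [hpc0, e1, zero_mul]
        simp
      · obtain ⟨q, hq⟩ := WithTop.ne_top_iff_exists.mp htop
        have e1 : objC ar I A vI vA (Sum.inr ⟨R, (v, t)⟩) = vI R v * q := by
          show (if 0 < vI R v ∧ vA R t ≠ ⊤ then vI R v * (vA R t).untopD 0 else 0) = vI R v * q
          rw [if_pos ⟨hp, htop⟩, ← hq]
          rw [WithTop.untopD_coe]
        rw [e1, ← hq, ← WithTop.coe_mul, ← WithTop.coe_mul]
        exact congrArg _ (by ring)
  have hdot : LP.dot (objC ar I A vI vA) (toWvec ar I A pv pc)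
      = ∑ s : SIA ar I A, objC ar I A vI vA (Sum.inr s) * pc s.1 s.2.1 s.2.2 := by
    unfold LP.dot
    rw [Fintype.sum_sum_type]
    have h0 : (∑ p : I × A, objC ar I A vI vA (Sum.inl p) * (toWvec ar I A pv pc) (Sum.inl p))
        = 0 :=
      Finset.sum_eq_zero (fun p _ => by show (0 : ℚ) * _ = 0; rw [zero_mul])
    rw [h0, zero_add]
    rfl
  rw [hdot, WithTop.coe_sum]
  rw [show (Finset.univ : Finset (SIA ar I A)) = Finset.univ.sigma (fun _ => Finset.univ)
    from (Finset.univ_sigma_univ).symm, Finset.sum_sigma]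
  unfold objVal
  apply Finset.sum_congr rfl
  intro R _
  rw [Fintype.sum_prod_type]
  apply Finset.sum_congr rfl
  intro v _
  apply Finset.sum_congr rfl
  intro t _
  exact hterm R v t

lemma sa1_pc_le_one (har : ∀ R, 0 < ar R) (pv : I → A → ℚ)
    (pc : ∀ R : σ, (Fin (ar R) → I) → (Fin (ar R) → A) → ℚ)
    (hfeas : SA1Feas ar vI vA pv pc) (R : σ) (v : Fin (ar R) → I) (hv : 0 < vI R v)
    (t : Fin (ar R) → A) : pc R v t ≤ 1 := by
  set i0 : Fin (ar R) := ⟨0, har R⟩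
  have hple : pc R v t ≤ ∑ t' ∈ Finset.univ.filter (fun t' : Fin (ar R) → A => t' i0 = t i0),
      pc R v t' :=
    Finset.single_le_sum (fun t' _ => hfeas.1.1 R v t' hv)
      (Finset.mem_filter.mpr ⟨Finset.mem_univ _, rfl⟩)
  rw [← hfeas.1.2.2.1 R v hv i0 (t i0)] at hple
  have hpv_nonneg : ∀ a, 0 ≤ pv (v i0) a := by
    intro a
    rw [hfeas.1.2.2.1 R v hv i0 a]
    exact Finset.sum_nonneg (fun t' _ => hfeas.1.1 R v t' hv)
  have hsum : pv (v i0) (t i0) ≤ ∑ a, pv (v i0) a :=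
    Finset.single_le_sum (fun a _ => hpv_nonneg a) (Finset.mem_univ _)
  rw [hfeas.1.2.1 (v i0)] at hsum
  linarith

lemma exists_optimal_SA1 (har : ∀ R, 0 < ar R) (hnn : NNeg ar vI) (hI : Nonempty I)
    (hfe : ∃ pv pc, SA1Feas ar vI vA pv pc) :
    ∃ pv pc, SA1Feas ar vI vA pv pc ∧ toE (objVal ar vI vA pc) ≤ OptSA1 ar vI vA := by
  obtain ⟨pv₀, pc₀, h₀⟩ := hfe
  have hA : Nonempty A := by
    by_contra hA
    haveI : IsEmpty A := not_nonempty_iff.mp hA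
    have h1 : ∑ a : A, pv₀ hI.some a = 1 := h₀.1.2.1 _
    rw [Finset.univ_eq_empty, Finset.sum_empty] at h1
    norm_num at h1
  haveI := hA
  haveI : Nonempty (WVar ar I A) := ⟨Sum.inl (hI.some, hA.some)⟩
  have hx₀ : LP.Feas (rowsSA ar I A vI vA) (toWvec ar I A pv₀ pc₀) := by
    rw [feas_iff_SA1]
    exact h₀
  have hbd : ∀ x, LP.Feas (rowsSA ar I A vI vA) x →
      (-∑ w : WVar ar I A, |objC ar I A vI vA w|) ≤ LP.dot (objC ar I A vI vA) x := by
    intro x hx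
    have hSx := (feas_iff_SA1 ar I A vI vA x).mp hx
    unfold LP.dot
    rw [← Finset.sum_neg_distrib]
    apply Finset.sum_le_sum
    intro w _
    cases w with
    | inl p =>
      show -|(0 : ℚ)| ≤ 0 * x (Sum.inl p)
      simp
    | inr s =>
      by_cases hcnd : 0 < vI s.1 s.2.1 ∧ vA s.1 s.2.2 ≠ ⊤
      · have h0x : 0 ≤ x (Sum.inr s) := hSx.1.1 s.1 s.2.1 s.2.2 hcnd.1
        have h1x : x (Sum.inr s) ≤ 1 :=
          sa1_pc_le_one ar I A vI vA har _ _ hSx s.1 s.2.1 hcnd.1 s.2.2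
        rcases le_or_gt 0 (objC ar I A vI vA (Sum.inr s)) with hc | hc
        · have hm := mul_nonneg hc h0x
          have ha := abs_nonneg (objC ar I A vI vA (Sum.inr s))
          linarith
        · have h2 : objC ar I A vI vA (Sum.inr s) * 1
              ≤ objC ar I A vI vA (Sum.inr s) * x (Sum.inr s) :=
            mul_le_mul_of_nonpos_left h1x (le_of_lt hc)
          rw [mul_one] at h2
          rw [abs_of_neg hc]
          linarith
      · have hz : objC ar I A vI vA (Sum.inr s) = 0 := by
          show (if 0 < vI s.1 s.2.1 ∧ vA s.1 s.2.2 ≠ ⊤ then _ else 0) = 0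
          rw [if_neg hcnd]
        rw [hz]
        simp
  obtain ⟨xs, hxs, hopt⟩ := LP.lp_min (rowsSA ar I A vI vA) (objC ar I A vI vA)
    (toWvec ar I A pv₀ pc₀) hx₀ _ hbd
  have hfs : SA1Feas ar vI vA (PVx ar I A xs) (PCx ar I A xs) :=
    (feas_iff_SA1 ar I A vI vA xs).mp hxs
  refine ⟨PVx ar I A xs, PCx ar I A xs, hfs, ?_⟩
  apply le_sInf
  rintro b ⟨pv', pc', hf', rfl⟩
  have e1 : objVal ar vI vA (PCx ar I A xs)
      = ((LP.dot (objC ar I A vI vA) xs : ℚ) : WithTop ℚ) := by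
    have hh := objVal_eq_dot ar I A vI vA hnn (PVx ar I A xs) (PCx ar I A xs) hfs
    rw [toWvec_PV_PC] at hh
    exact hh
  have e2 : objVal ar vI vA pc'
      = ((LP.dot (objC ar I A vI vA) (toWvec ar I A pv' pc') : ℚ) : WithTop ℚ) :=
    objVal_eq_dot ar I A vI vA hnn pv' pc' hf'
  rw [e1, e2]
  have hle := hopt (toWvec ar I A pv' pc')
    ((feas_iff_SA1 ar I A vI vA (toWvec ar I A pv' pc')).mpr hf')
  exact toE_coe_mono hle

end Objective
/-! ## Stage 4a: combinatorial data extracted from an SA¹ solution -/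

section DataGlobal

variable {σ : Type} [Fintype σ] (ar : σ → ℕ) {I : Type} [Fintype I] [DecidableEq I]
  {A : Type} [Fintype A] [DecidableEq A]
  (vI : ∀ R : σ, (Fin (ar R) → I) → ℚ)
  (vA : ∀ R : σ, (Fin (ar R) → A) → WithTop ℚ)
  (pv : I → A → ℚ) (pc : ∀ R : σ, (Fin (ar R) → I) → (Fin (ar R) → A) → ℚ)

lemma exists_data_global (har : ∀ R, 0 < ar R) (hA : Nonempty A)
    (hfeas : SA1Feas ar vI vA pv pc) :
    ∃ m : ℕ, 0 < m ∧ ∃ (g : I → Fin m → A)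
      (LL : ∀ c : CVert σ ar I, Fin m → (Fin (ar c.1) → A))
      (Φ : ∀ c : CVert σ ar I, Fin m → I → Fin m),
      (∀ c u, Function.Injective (fun ℓ => Φ c ℓ u)) ∧
      (∀ c : CVert σ ar I, 0 < vI c.1 c.2 →
        (∀ u, (∃ i, c.2 i = u) → Function.Surjective (fun ℓ => Φ c ℓ u)) ∧
        (∀ ℓ i, g (c.2 i) (Φ c ℓ (c.2 i)) = LL c ℓ i) ∧
        (∀ t : Fin (ar c.1) → A,
          ((Finset.univ.filter (fun ℓ => LL c ℓ = t)).card : ℚ) = m * pc c.1 c.2 t)) := by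
  classical
  set m : ℕ := (∏ u : I, ∏ a : A, (pv u a).den) * ∏ s : SIA ar I A, (pc s.1 s.2.1 s.2.2).den
    with hmdef
  have hm : 0 < m := by
    apply mul_pos
    · exact Finset.prod_pos (fun u _ => Finset.prod_pos (fun a _ => (pv u a).den_pos))
    · exact Finset.prod_pos (fun s _ => (pc s.1 s.2.1 s.2.2).den_pos)
  have hmq : (0 : ℚ) < (m : ℚ) := by exact_mod_cast hm
  have hdvd_pv : ∀ u a, (pv u a).den ∣ m := by
    intro u a
    apply dvd_mul_of_dvd_left
    exact dvd_trans (Finset.dvd_prod_of_mem (fun a' => (pv u a').den) (Finset.mem_univ a))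
      (Finset.dvd_prod_of_mem (fun u' => ∏ a' : A, (pv u' a').den) (Finset.mem_univ u))
  have hdvd_pc : ∀ (R : σ) (v : Fin (ar R) → I) (t : Fin (ar R) → A), (pc R v t).den ∣ m :=
    fun R v t => Dvd.dvd.mul_left
      (Finset.dvd_prod_of_mem (fun s : SIA ar I A => (pc s.1 s.2.1 s.2.2).den)
        (Finset.mem_univ ⟨R, (v, t)⟩)) _
  have hpv_marg := hfeas.1.2.2.1
  have hpc_nn := hfeas.1.1
  have hpv_nn : ∀ u : I, (∃ c : CVert σ ar I, 0 < vI c.1 c.2 ∧ ∃ i, c.2 i = u) →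
      ∀ a, 0 ≤ pv u a := by
    rintro u ⟨c, hc, i, rfl⟩ a
    rw [hpv_marg c.1 c.2 hc i a]
    exact Finset.sum_nonneg (fun t _ => hpc_nn c.1 c.2 t hc)
  have hnpv : ∀ u : I, ∃ w : A → ℕ, (∑ a, w a = m) ∧
      ((∃ c : CVert σ ar I, 0 < vI c.1 c.2 ∧ ∃ i, c.2 i = u) →
        ∀ a, (w a : ℚ) = m * pv u a) := by
    intro u
    by_cases hrel : ∃ c : CVert σ ar I, 0 < vI c.1 c.2 ∧ ∃ i, c.2 i = u
    · have hk : ∀ a, ∃ k : ℕ, (k : ℚ) = m * pv u a :=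
        fun a => exists_nat_cast_mul _ (hpv_nn u hrel a) m (hdvd_pv u a)
      choose w hw using hk
      have hsum : ((∑ a, w a : ℕ) : ℚ) = (m : ℚ) := by
        push_cast
        rw [Finset.sum_congr rfl (fun a _ => hw a), ← Finset.mul_sum, hfeas.1.2.1 u, mul_one]
      exact ⟨w, by exact_mod_cast hsum, fun _ a => hw a⟩
    · refine ⟨fun a => if a = hA.some then m else 0, ?_, fun h => absurd h hrel⟩
      rw [Finset.sum_ite_eq' Finset.univ hA.some (fun _ => m)]
      simp
  choose npv hnpv_sum hnpv_rel using hnpv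
  have hgex : ∀ u : I, ∃ gu : Fin m → A, ∀ a,
      (Finset.univ.filter (fun ℓ => gu ℓ = a)).card = npv u a :=
    fun u => exists_fiber_fun (npv u) m (hnpv_sum u)
  choose g hg using hgex
  have hnpcex : ∀ s : SIA ar I A, ∃ k : ℕ,
      0 < vI s.1 s.2.1 → (k : ℚ) = m * pc s.1 s.2.1 s.2.2 := by
    intro s
    by_cases hv : 0 < vI s.1 s.2.1
    · obtain ⟨k, hk⟩ := exists_nat_cast_mul _ (hpc_nn s.1 s.2.1 s.2.2 hv) m (hdvd_pc _ _ _)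
      exact ⟨k, fun _ => hk⟩
    · exact ⟨0, fun h => absurd h hv⟩
  choose npc hnpc using hnpcex
  refine ⟨m, hm, ?_⟩
  have hdataex : ∀ c : CVert σ ar I,
      ∃ (L : Fin m → (Fin (ar c.1) → A)) (Φ : Fin m → I → Fin m),
      (∀ u, Function.Injective (fun ℓ => Φ ℓ u)) ∧
      (0 < vI c.1 c.2 →
        (∀ u, (∃ i, c.2 i = u) → Function.Surjective (fun ℓ => Φ ℓ u)) ∧
        (∀ ℓ i, g (c.2 i) (Φ ℓ (c.2 i)) = L ℓ i) ∧
        (∀ t, ((Finset.univ.filter (fun ℓ => L ℓ = t)).card : ℚ) = m * pc c.1 c.2 t)) := by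
    intro c
    by_cases hv : 0 < vI c.1 c.2
    case neg =>
      exact ⟨fun _ _ => hA.some, fun ℓ _ => ℓ, fun u a b h => h, fun h => absurd h hv⟩
    have i00 : Fin (ar c.1) := ⟨0, har c.1⟩
    have hsum_pc : ∑ t : Fin (ar c.1) → A, pc c.1 c.2 t = 1 := by
      rw [← Finset.sum_fiberwise Finset.univ (fun t : Fin (ar c.1) → A => t i00)
        (fun t => pc c.1 c.2 t)]
      rw [Finset.sum_congr rfl (fun a _ => (hpv_marg c.1 c.2 hv i00 a).symm)]
      exact hfeas.1.2.1 (c.2 i00)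
    have hsum_npc : ∑ t : Fin (ar c.1) → A, npc ⟨c.1, (c.2, t)⟩ = m := by
      have hq : ((∑ t : Fin (ar c.1) → A, npc ⟨c.1, (c.2, t)⟩ : ℕ) : ℚ) = (m : ℚ) := by
        push_cast
        rw [Finset.sum_congr rfl (fun t _ => hnpc ⟨c.1, (c.2, t)⟩ hv), ← Finset.mul_sum,
          hsum_pc, mul_one]
      exact_mod_cast hq
    obtain ⟨L, hL⟩ := exists_fiber_fun (fun t : Fin (ar c.1) → A => npc ⟨c.1, (c.2, t)⟩) m
      hsum_npc
    have hLcard : ∀ t, ((Finset.univ.filter (fun ℓ => L ℓ = t)).card : ℚ)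
        = m * pc c.1 c.2 t := by
      intro t
      rw [hL t]
      exact hnpc ⟨c.1, (c.2, t)⟩ hv
    have hLpos : ∀ ℓ, 0 < pc c.1 c.2 (L ℓ) := by
      intro ℓ
      have hmem : ℓ ∈ Finset.univ.filter (fun ℓ' => L ℓ' = L ℓ) :=
        Finset.mem_filter.mpr ⟨Finset.mem_univ _, rfl⟩
      have hcard : 0 < (Finset.univ.filter (fun ℓ' => L ℓ' = L ℓ)).card :=
        Finset.card_pos.mpr ⟨ℓ, hmem⟩
      have hcast : (0 : ℚ) < ((Finset.univ.filter (fun ℓ' => L ℓ' = L ℓ)).card : ℚ) := by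
        exact_mod_cast hcard
      rw [hLcard (L ℓ)] at hcast
      nlinarith
    have hcons : ∀ ℓ (i j : Fin (ar c.1)), c.2 i = c.2 j → L ℓ i = L ℓ j := by
      intro ℓ i j hij
      by_contra hne
      have h1 := hfeas.2 c.1 c.2 hv (L ℓ) ⟨i, j, hij, hne⟩
      have h2 := hLpos ℓ
      linarith
    have hmatch : ∀ (i0 : Fin (ar c.1)) (a : A),
        (Finset.univ.filter (fun ℓ => L ℓ i0 = a)).card = npv (c.2 i0) a := by
      intro i0 a
      have hfib : ∀ b ∈ Finset.univ.filter (fun t : Fin (ar c.1) → A => t i0 = a),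
          ((Finset.univ.filter (fun ℓ => L ℓ i0 = a)).filter (fun ℓ => L ℓ = b))
            = Finset.univ.filter (fun ℓ => L ℓ = b) := by
        intro b hb
        have hb' := (Finset.mem_filter.mp hb).2
        rw [Finset.filter_filter]
        apply Finset.filter_congr
        intro ℓ _
        constructor
        · rintro ⟨-, h2⟩; exact h2
        · intro h2; exact ⟨by rw [h2, hb'], h2⟩
      have hQ : ((Finset.univ.filter (fun ℓ => L ℓ i0 = a)).card : ℚ)
          = m * pv (c.2 i0) a := by
        rw [Finset.card_eq_sum_card_fiberwise
          (f := L) (t := Finset.univ.filter (fun t : Fin (ar c.1) → A => t i0 = a))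
          (fun ℓ hℓ => Finset.mem_filter.mpr ⟨Finset.mem_univ _, (Finset.mem_filter.mp hℓ).2⟩)]
        push_cast
        rw [Finset.sum_congr rfl (fun b hb => by rw [hfib b hb])]
        rw [Finset.sum_congr rfl (fun b _ => hLcard b), ← Finset.mul_sum]
        rw [← hpv_marg c.1 c.2 hv i0 a]
      have hN : ((npv (c.2 i0) a : ℕ) : ℚ) = m * pv (c.2 i0) a :=
        hnpv_rel (c.2 i0) ⟨c, hv, i0, rfl⟩ a
      have : ((Finset.univ.filter (fun ℓ => L ℓ i0 = a)).card : ℚ)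
          = ((npv (c.2 i0) a : ℕ) : ℚ) := by rw [hQ, hN]
      exact_mod_cast this
    have hperm : ∀ u : I, ∃ β : Fin m → Fin m, Function.Injective β ∧
        ∀ hu : ∃ i, c.2 i = u, Function.Surjective β ∧
          ∀ ℓ, g u (β ℓ) = L ℓ (hu.choose) := by
      intro u
      by_cases hu : ∃ i, c.2 i = u
      · have hi0p : c.2 hu.choose = u := hu.choose_spec
        have hc : ∀ a, (Finset.univ.filter (fun ℓ => g u ℓ = a)).card
            = (Finset.univ.filter (fun ℓ => L ℓ hu.choose = a)).card := by
          intro a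
          rw [hg u a, hmatch hu.choose a, hi0p]
        obtain ⟨β, hβ⟩ := exists_perm_comp (g u) (fun ℓ => L ℓ hu.choose) hc
        exact ⟨β, β.injective, fun hu' => ⟨β.surjective, fun ℓ => hβ ℓ⟩⟩
      · exact ⟨id, fun a b h => h, fun hu' => absurd hu' hu⟩
    choose β hβinj hβ using hperm
    refine ⟨L, fun ℓ u => β u ℓ, fun u => hβinj u, fun _ => ⟨?_, ?_, hLcard⟩⟩
    · intro u hu
      exact (hβ u hu).1
    · intro ℓ i
      have hu : ∃ i', c.2 i' = c.2 i := ⟨i, rfl⟩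
      have h1 := (hβ (c.2 i) hu).2 ℓ
      rw [h1]
      exact hcons ℓ hu.choose i hu.choose_spec
  choose LL Φ hΦinj hdata using hdataex
  exact ⟨g, LL, Φ, hΦinj, hdata⟩

end DataGlobal
/-! ## Stage 4b: the pair of structures on `I × Fin m` -/

section PairConstruction

variable {σ : Type} [Fintype σ] (ar : σ → ℕ) {I : Type} [Fintype I] [DecidableEq I]
  {A : Type} [Fintype A] [DecidableEq A]
  (vI : ∀ R : σ, (Fin (ar R) → I) → ℚ)

/-- Class of a variable copy. -/
def clV (m : ℕ) : I × Fin m → I ⊕ CVert σ ar I := fun p => Sum.inl p.1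

/-- Class of a constraint copy. -/
def clC (m : ℕ) : CVert σ ar (I × Fin m) → I ⊕ CVert σ ar I :=
  fun c' => Sum.inr ⟨c'.1, fun i => (c'.2 i).1⟩

/-- Class labels. -/
noncomputable def labC (m : ℕ) : (I ⊕ CVert σ ar I) → Option (σ × ℚ) :=
  Sum.elim (fun _ => none) (fun c => some (c.1, vI c.1 c.2 / m))

/-- Class neighbourhood data. -/
noncomputable def Nbase : (I ⊕ CVert σ ar I) → Multiset (Finset ℕ × (I ⊕ CVert σ ar I)) :=
  Sum.elim
    (fun u => (Finset.univ.filter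
        (fun c : CVert σ ar I => 0 < vI c.1 c.2 ∧ ∃ i, c.2 i = u)).val.map
      (fun c => (edgeLab u c, Sum.inr c)))
    (fun c => (Finset.univ.filter (fun u : I => ∃ i, c.2 i = u)).val.map
      (fun u => (edgeLab u c, Sum.inl u)))

variable (m : ℕ) (Φ : ∀ c : CVert σ ar I, Fin m → I → Fin m)

/-- Scope of the `ℓ`-th copy of a constraint in the twisted structure. -/
def scopeF (c : CVert σ ar I) (ℓ : Fin m) : Fin (ar c.1) → I × Fin m :=
  fun i => (c.2 i, Φ c ℓ (c.2 i))

/-- The "diagonal" structure `Y₁`. -/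
noncomputable def vY1 : ∀ R : σ, (Fin (ar R) → I × Fin m) → ℚ := fun R t =>
  if 0 < vI R (fun i => (t i).1) ∧ (∃ j, ∀ i, (t i).2 = j)
    then vI R (fun i => (t i).1) / m else 0

/-- The "twisted" structure `Y₂`. -/
noncomputable def vY2 : ∀ R : σ, (Fin (ar R) → I × Fin m) → ℚ := fun R t =>
  if 0 < vI R (fun i => (t i).1) ∧ (∃ ℓ, t = scopeF ar m Φ ⟨R, fun i => (t i).1⟩ ℓ)
    then vI R (fun i => (t i).1) / m else 0

lemma vY1_nneg (hm : 0 < m) (hnn : NNeg ar vI) : NNeg ar (vY1 ar vI m) := by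
  intro R t
  unfold vY1
  split_ifs with h
  · exact div_nonneg (hnn R _) (by exact_mod_cast le_of_lt hm)
  · exact le_refl 0

lemma vY2_nneg (hm : 0 < m) (hnn : NNeg ar vI) : NNeg ar (vY2 ar vI m Φ) := by
  intro R t
  unfold vY2
  split_ifs with h
  · exact div_nonneg (hnn R _) (by exact_mod_cast le_of_lt hm)
  · exact le_refl 0

lemma vY1_pos_iff (hm : 0 < m) (R : σ) (t : Fin (ar R) → I × Fin m) :
    0 < vY1 ar vI m R t ↔
      (0 < vI R (fun i => (t i).1) ∧ ∃ j, ∀ i, (t i).2 = j) := by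
  unfold vY1
  split_ifs with h
  · have hmq : (0 : ℚ) < (m : ℚ) := by exact_mod_cast hm
    exact ⟨fun _ => h, fun _ => div_pos h.1 hmq⟩
  · exact ⟨fun hc => absurd hc (lt_irrefl 0), fun hc => absurd hc h⟩

lemma vY2_pos_iff (hm : 0 < m) (R : σ) (t : Fin (ar R) → I × Fin m) :
    0 < vY2 ar vI m Φ R t ↔
      (0 < vI R (fun i => (t i).1)
        ∧ ∃ ℓ, t = scopeF ar m Φ ⟨R, fun i => (t i).1⟩ ℓ) := by
  unfold vY2
  split_ifs with h
  · have hmq : (0 : ℚ) < (m : ℚ) := by exact_mod_cast hm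
    exact ⟨fun _ => h, fun _ => div_pos h.1 hmq⟩
  · exact ⟨fun hc => absurd hc (lt_irrefl 0), fun hc => absurd hc h⟩

lemma degSeq_vY1_eq_vY2 (hm : 0 < m) (har : ∀ R, 0 < ar R) (hnn : NNeg ar vI)
    (hΦinj : ∀ c u, Function.Injective (fun ℓ => Φ c ℓ u))
    (hsurj : ∀ c : CVert σ ar I, 0 < vI c.1 c.2 →
      ∀ u, (∃ i, c.2 i = u) → Function.Surjective (fun ℓ => Φ c ℓ u)) :
    degSeq ar (vY1 ar vI m) = degSeq ar (vY2 ar vI m Φ) := by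
  classical
  -- hypotheses of the class lemma for Y₁
  have h1a : ∀ p : I × Fin m, labC ar vI m (clV ar m p) = none := fun p => rfl
  have h1b : ∀ c' : CVert σ ar (I × Fin m), 0 < vY1 ar vI m c'.1 c'.2 →
      labC ar vI m (clC ar m c') = some (c'.1, vY1 ar vI m c'.1 c'.2) := by
    intro c' h
    have hval : vY1 ar vI m c'.1 c'.2 = vI c'.1 (fun i => (c'.2 i).1) / m := by
      unfold vY1
      rw [if_pos ((vY1_pos_iff ar vI m hm c'.1 c'.2).mp h)]
    show some (c'.1, vI c'.1 (fun i => (c'.2 i).1) / m) = some (c'.1, vY1 ar vI m c'.1 c'.2)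
    rw [hval]
  have h1c : ∀ p : I × Fin m, (Finset.univ.filter
        (fun c' : CVert σ ar (I × Fin m) =>
          0 < vY1 ar vI m c'.1 c'.2 ∧ ∃ i, c'.2 i = p)).val.map
        (fun c' => (edgeLab p c', clC ar m c'))
      = Nbase ar vI (clV ar m p) := by
    intro p
    have hembinj : Function.Injective (fun c : CVert σ ar I =>
        (⟨c.1, fun i => (c.2 i, p.2)⟩ : CVert σ ar (I × Fin m))) := by
      rintro ⟨R, v⟩ ⟨R', v'⟩ h
      simp only [Sigma.mk.inj_iff] at h
      obtain ⟨rfl, h2⟩ := h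
      have h3 := eq_of_heq h2
      have h4 : v = v' := funext fun i => congrArg Prod.fst (congrFun h3 i)
      rw [h4]
    have hfil : Finset.univ.filter
        (fun c' : CVert σ ar (I × Fin m) =>
          0 < vY1 ar vI m c'.1 c'.2 ∧ ∃ i, c'.2 i = p)
        = (Finset.univ.filter
            (fun c : CVert σ ar I => 0 < vI c.1 c.2 ∧ ∃ i, c.2 i = p.1)).map
          ⟨_, hembinj⟩ := by
      ext c'
      simp only [Finset.mem_map, Finset.mem_filter, Finset.mem_univ, true_and,
        Function.Embedding.coeFn_mk]
      constructor
      · rintro ⟨hps, i, hi⟩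
        obtain ⟨hv, j, hj⟩ := (vY1_pos_iff ar vI m hm c'.1 c'.2).mp hps
        have hjp : j = p.2 := by rw [← hj i, hi]
        refine ⟨⟨c'.1, fun i' => (c'.2 i').1⟩, ⟨hv, ⟨i, by show (c'.2 i).1 = p.1; rw [hi]⟩⟩, ?_⟩
        show (⟨c'.1, fun i' => ((c'.2 i').1, p.2)⟩ : CVert σ ar (I × Fin m)) = c'
        have he : (fun i' => ((c'.2 i').1, p.2)) = c'.2 := by
          funext i'
          rw [← hjp]
          exact Prod.ext rfl (hj i').symm
        rw [he]
      · rintro ⟨c, ⟨hv, i, hi⟩, rfl⟩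
        constructor
        · exact (vY1_pos_iff ar vI m hm _ _).mpr ⟨hv, ⟨p.2, fun _ => rfl⟩⟩
        · exact ⟨i, by show (c.2 i, p.2) = p; rw [hi]⟩
    rw [hfil, Finset.map_val, Multiset.map_map]
    show _ = (Finset.univ.filter
        (fun c : CVert σ ar I => 0 < vI c.1 c.2 ∧ ∃ i, c.2 i = p.1)).val.map
      (fun c => (edgeLab p.1 c, Sum.inr c))
    apply Multiset.map_congr rfl
    intro c hc
    simp only [Function.comp_apply, Function.Embedding.coeFn_mk]
    have hedge : edgeLab p (⟨c.1, fun i => (c.2 i, p.2)⟩ : CVert σ ar (I × Fin m))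
        = edgeLab p.1 c := by
      unfold edgeLab
      congr 1
      apply Finset.filter_congr
      intro i _
      show (c.2 i, p.2) = p ↔ c.2 i = p.1
      constructor
      · intro h; rw [← h]
      · intro h; exact Prod.ext h rfl
    rw [hedge]
    rfl
  have h1d : ∀ c' : CVert σ ar (I × Fin m), 0 < vY1 ar vI m c'.1 c'.2 →
      (Finset.univ.filter (fun p : I × Fin m => ∃ i, c'.2 i = p)).val.map
        (fun p => (edgeLab p c', clV ar m p))
      = Nbase ar vI (clC ar m c') := by
    intro c' h
    obtain ⟨hv, j, hj⟩ := (vY1_pos_iff ar vI m hm c'.1 c'.2).mp h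
    have hembinj : Function.Injective (fun u : I => (u, j)) := by
      intro a b hab
      exact congrArg Prod.fst hab
    have hfil : Finset.univ.filter (fun p : I × Fin m => ∃ i, c'.2 i = p)
        = (Finset.univ.filter (fun u : I => ∃ i, (c'.2 i).1 = u)).map ⟨_, hembinj⟩ := by
      ext p
      simp only [Finset.mem_map, Finset.mem_filter, Finset.mem_univ, true_and,
        Function.Embedding.coeFn_mk]
      constructor
      · rintro ⟨i, hi⟩
        refine ⟨(c'.2 i).1, ⟨i, rfl⟩, ?_⟩
        rw [← hi]
        exact Prod.ext rfl (hj i).symm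
      · rintro ⟨u, ⟨i, hi⟩, rfl⟩
        exact ⟨i, Prod.ext hi (hj i)⟩
    rw [hfil, Finset.map_val, Multiset.map_map]
    show _ = (Finset.univ.filter (fun u : I => ∃ i, (fun i' => (c'.2 i').1) i = u)).val.map
      (fun u => (edgeLab u (⟨c'.1, fun i => (c'.2 i).1⟩ : CVert σ ar I), Sum.inl u))
    apply Multiset.map_congr rfl
    intro u hu
    simp only [Function.comp_apply, Function.Embedding.coeFn_mk]
    have hedge : edgeLab (u, j) c'
        = edgeLab u (⟨c'.1, fun i => (c'.2 i).1⟩ : CVert σ ar I) := by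
      unfold edgeLab
      congr 1
      apply Finset.filter_congr
      intro i _
      show c'.2 i = (u, j) ↔ (c'.2 i).1 = u
      constructor
      · intro h2; rw [h2]
      · intro h2; rw [← h2, ← hj i]
    rw [hedge]
    exact rfl
  -- hypotheses of the class lemma for Y₂
  have h2b : ∀ c' : CVert σ ar (I × Fin m), 0 < vY2 ar vI m Φ c'.1 c'.2 →
      labC ar vI m (clC ar m c') = some (c'.1, vY2 ar vI m Φ c'.1 c'.2) := by
    intro c' h
    have hval : vY2 ar vI m Φ c'.1 c'.2 = vI c'.1 (fun i => (c'.2 i).1) / m := by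
      unfold vY2
      rw [if_pos ((vY2_pos_iff ar vI m Φ hm c'.1 c'.2).mp h)]
    show some (c'.1, vI c'.1 (fun i => (c'.2 i).1) / m) = some (c'.1, vY2 ar vI m Φ c'.1 c'.2)
    rw [hval]
  have h2c : ∀ p : I × Fin m, (Finset.univ.filter
        (fun c' : CVert σ ar (I × Fin m) =>
          0 < vY2 ar vI m Φ c'.1 c'.2 ∧ ∃ i, c'.2 i = p)).val.map
        (fun c' => (edgeLab p c', clC ar m c'))
      = Nbase ar vI (clV ar m p) := by
    intro p
    have hsel : ∀ c : CVert σ ar I, ∃ ℓ : Fin m,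
        (0 < vI c.1 c.2 ∧ ∃ i, c.2 i = p.1) → Φ c ℓ p.1 = p.2 := by
      intro c
      by_cases hc : 0 < vI c.1 c.2 ∧ ∃ i, c.2 i = p.1
      · obtain ⟨ℓ, hℓ⟩ := hsurj c hc.1 p.1 hc.2 p.2
        exact ⟨ℓ, fun _ => hℓ⟩
      · exact ⟨⟨0, hm⟩, fun h' => absurd h' hc⟩
    choose ℓsel hℓsel using hsel
    have hembinj : Function.Injective (fun c : CVert σ ar I =>
        (⟨c.1, scopeF ar m Φ c (ℓsel c)⟩ : CVert σ ar (I × Fin m))) := by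
      rintro ⟨R, v⟩ ⟨R', v'⟩ h
      simp only [Sigma.mk.inj_iff] at h
      obtain ⟨rfl, h2⟩ := h
      have h3 := eq_of_heq h2
      have h4 : v = v' := funext fun i => congrArg Prod.fst (congrFun h3 i)
      exact congrArg _ h4
    have hfil : Finset.univ.filter
        (fun c' : CVert σ ar (I × Fin m) =>
          0 < vY2 ar vI m Φ c'.1 c'.2 ∧ ∃ i, c'.2 i = p)
        = (Finset.univ.filter
            (fun c : CVert σ ar I => 0 < vI c.1 c.2 ∧ ∃ i, c.2 i = p.1)).map
          ⟨_, hembinj⟩ := by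
      ext c'
      simp only [Finset.mem_map, Finset.mem_filter, Finset.mem_univ, true_and,
        Function.Embedding.coeFn_mk]
      constructor
      · rintro ⟨hps, i, hi⟩
        obtain ⟨hv, ℓ, hℓ⟩ := (vY2_pos_iff ar vI m Φ hm c'.1 c'.2).mp hps
        have hbase : (c'.2 i).1 = p.1 := by rw [hi]
        have hΦp : Φ ⟨c'.1, fun i' => (c'.2 i').1⟩ ℓ p.1 = p.2 := by
          have h2 : (c'.2 i).2 = Φ ⟨c'.1, fun i' => (c'.2 i').1⟩ ℓ ((c'.2 i).1) :=
            congrArg Prod.snd (congrFun hℓ i)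
          rw [hbase] at h2
          exact h2.symm.trans (congrArg Prod.snd hi)
        have hℓeq : ℓ = ℓsel ⟨c'.1, fun i' => (c'.2 i').1⟩ :=
          hΦinj ⟨c'.1, fun i' => (c'.2 i').1⟩ p.1
            (by show Φ ⟨c'.1, fun i' => (c'.2 i').1⟩ ℓ p.1
                  = Φ ⟨c'.1, fun i' => (c'.2 i').1⟩ (ℓsel ⟨c'.1, fun i' => (c'.2 i').1⟩) p.1
                rw [hΦp, hℓsel ⟨c'.1, fun i' => (c'.2 i').1⟩ ⟨hv, ⟨i, hbase⟩⟩])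
        refine ⟨⟨c'.1, fun i' => (c'.2 i').1⟩, ⟨hv, ⟨i, hbase⟩⟩, ?_⟩
        show (⟨c'.1, scopeF ar m Φ ⟨c'.1, fun i' => (c'.2 i').1⟩
          (ℓsel ⟨c'.1, fun i' => (c'.2 i').1⟩)⟩ : CVert σ ar (I × Fin m)) = c'
        rw [← hℓeq, ← hℓ]
      · rintro ⟨c, ⟨hv, i, hi⟩, rfl⟩
        refine ⟨(vY2_pos_iff ar vI m Φ hm _ _).mpr ⟨hv, ⟨ℓsel c, rfl⟩⟩, ?_⟩
        refine ⟨i, Prod.ext hi ?_⟩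
        show Φ c (ℓsel c) (c.2 i) = p.2
        rw [hi]
        exact hℓsel c ⟨hv, ⟨i, hi⟩⟩
    rw [hfil, Finset.map_val, Multiset.map_map]
    show _ = (Finset.univ.filter
        (fun c : CVert σ ar I => 0 < vI c.1 c.2 ∧ ∃ i, c.2 i = p.1)).val.map
      (fun c => (edgeLab p.1 c, Sum.inr c))
    apply Multiset.map_congr rfl
    intro c hc
    obtain ⟨-, hv, i, hi⟩ := Finset.mem_filter.mp (Finset.mem_val.mp hc)
    simp only [Function.comp_apply, Function.Embedding.coeFn_mk]
    have hΦpp : Φ c (ℓsel c) p.1 = p.2 := hℓsel c ⟨hv, ⟨i, hi⟩⟩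
    have hedge : edgeLab p
        (⟨c.1, scopeF ar m Φ c (ℓsel c)⟩ : CVert σ ar (I × Fin m)) = edgeLab p.1 c := by
      unfold edgeLab scopeF
      congr 1
      apply Finset.filter_congr
      intro i' _
      show (c.2 i', Φ c (ℓsel c) (c.2 i')) = p ↔ c.2 i' = p.1
      constructor
      · intro h2; exact congrArg Prod.fst h2
      · intro h2; exact Prod.ext h2 (by rw [h2, hΦpp])
    rw [hedge]
    exact rfl
  have h2d : ∀ c' : CVert σ ar (I × Fin m), 0 < vY2 ar vI m Φ c'.1 c'.2 →
      (Finset.univ.filter (fun p : I × Fin m => ∃ i, c'.2 i = p)).val.map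
        (fun p => (edgeLab p c', clV ar m p))
      = Nbase ar vI (clC ar m c') := by
    intro c' h
    obtain ⟨hv, ℓ, hℓ⟩ := (vY2_pos_iff ar vI m Φ hm c'.1 c'.2).mp h
    have hembinj : Function.Injective
        (fun u : I => (u, Φ ⟨c'.1, fun i => (c'.2 i).1⟩ ℓ u)) := by
      intro a b hab
      exact congrArg Prod.fst hab
    have hfil : Finset.univ.filter (fun p : I × Fin m => ∃ i, c'.2 i = p)
        = (Finset.univ.filter (fun u : I => ∃ i, (c'.2 i).1 = u)).map ⟨_, hembinj⟩ := by
      ext p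
      simp only [Finset.mem_map, Finset.mem_filter, Finset.mem_univ, true_and,
        Function.Embedding.coeFn_mk]
      constructor
      · rintro ⟨i, hi⟩
        refine ⟨(c'.2 i).1, ⟨i, rfl⟩, ?_⟩
        rw [← hi]
        exact (congrFun hℓ i).symm
      · rintro ⟨u, ⟨i, hi⟩, rfl⟩
        refine ⟨i, (congrFun hℓ i).trans ?_⟩
        show ((c'.2 i).1, Φ ⟨c'.1, fun i' => (c'.2 i').1⟩ ℓ ((c'.2 i).1))
          = (u, Φ ⟨c'.1, fun i' => (c'.2 i').1⟩ ℓ u)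
        rw [hi]
    rw [hfil, Finset.map_val, Multiset.map_map]
    show _ = (Finset.univ.filter (fun u : I => ∃ i, (fun i' => (c'.2 i').1) i = u)).val.map
      (fun u => (edgeLab u (⟨c'.1, fun i => (c'.2 i).1⟩ : CVert σ ar I), Sum.inl u))
    apply Multiset.map_congr rfl
    intro u hu
    simp only [Function.comp_apply, Function.Embedding.coeFn_mk]
    have hedge : edgeLab (u, Φ ⟨c'.1, fun i => (c'.2 i).1⟩ ℓ u) c'
        = edgeLab u (⟨c'.1, fun i => (c'.2 i).1⟩ : CVert σ ar I) := by
      unfold edgeLab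
      congr 1
      apply Finset.filter_congr
      intro i' _
      show c'.2 i' = (u, Φ ⟨c'.1, fun i => (c'.2 i).1⟩ ℓ u) ↔ (c'.2 i').1 = u
      constructor
      · intro h2; rw [h2]
      · intro h2
        refine (congrFun hℓ i').trans ?_
        show ((c'.2 i').1, Φ ⟨c'.1, fun i => (c'.2 i).1⟩ ℓ ((c'.2 i').1)) = _
        rw [h2]
    rw [hedge]
    exact rfl
  -- apply the class lemma to both structures
  rw [degSeq_eq_classMul (vY1 ar vI m) (clV ar m) (clC ar m) (labC ar vI m) (Nbase ar vI)
      h1a h1b h1c h1d,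
    degSeq_eq_classMul (vY2 ar vI m Φ) (clV ar m) (clC ar m) (labC ar vI m) (Nbase ar vI)
      h1a h2b h2c h2d]
  congr 1
  congr 1
  -- constraint class multisets
  have hembD : Function.Injective (fun q : CVert σ ar I × Fin m =>
      (⟨q.1.1, fun i => (q.1.2 i, q.2)⟩ : CVert σ ar (I × Fin m))) := by
    rintro ⟨⟨R, v⟩, j⟩ ⟨⟨R', v'⟩, j'⟩ h
    simp only [Sigma.mk.inj_iff] at h
    obtain ⟨rfl, h2⟩ := h
    have h3 := eq_of_heq h2
    have h4 : v = v' := funext fun i => congrArg Prod.fst (congrFun h3 i)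
    have h5 : j = j' := congrArg Prod.snd (congrFun h3 ⟨0, har R⟩)
    subst h4; subst h5; rfl
  have hembS : Function.Injective (fun q : CVert σ ar I × Fin m =>
      (⟨q.1.1, scopeF ar m Φ q.1 q.2⟩ : CVert σ ar (I × Fin m))) := by
    rintro ⟨⟨R, v⟩, ℓ⟩ ⟨⟨R', v'⟩, ℓ'⟩ h
    simp only [Sigma.mk.inj_iff] at h
    obtain ⟨rfl, h2⟩ := h
    have h3 := eq_of_heq h2
    have h4 : v = v' := funext fun i => congrArg Prod.fst (congrFun h3 i)
    subst h4
    have h5 : ℓ = ℓ' := by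
      apply hΦinj ⟨R, v⟩ (v ⟨0, har R⟩)
      exact congrArg Prod.snd (congrFun h3 ⟨0, har R⟩)
    subst h5; rfl
  have hfil1 : Finset.univ.filter
      (fun c' : CVert σ ar (I × Fin m) => 0 < vY1 ar vI m c'.1 c'.2)
      = ((Finset.univ.filter (fun c : CVert σ ar I => 0 < vI c.1 c.2)) ×ˢ
          (Finset.univ : Finset (Fin m))).map ⟨_, hembD⟩ := by
    ext c'
    simp only [Finset.mem_map, Finset.mem_filter, Finset.mem_univ, true_and,
      Finset.mem_product, Function.Embedding.coeFn_mk]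
    constructor
    · intro hps
      obtain ⟨hv, j, hj⟩ := (vY1_pos_iff ar vI m hm c'.1 c'.2).mp hps
      refine ⟨(⟨c'.1, fun i => (c'.2 i).1⟩, j), ⟨hv, trivial⟩, ?_⟩
      show (⟨c'.1, fun i => ((c'.2 i).1, j)⟩ : CVert σ ar (I × Fin m)) = c'
      have he : (fun i => ((c'.2 i).1, j)) = c'.2 := by
        funext i'
        exact Prod.ext rfl (hj i').symm
      rw [he]
    · rintro ⟨⟨c, j⟩, ⟨hv, -⟩, rfl⟩
      exact (vY1_pos_iff ar vI m hm _ _).mpr ⟨hv, ⟨j, fun _ => rfl⟩⟩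
  have hfil2 : Finset.univ.filter
      (fun c' : CVert σ ar (I × Fin m) => 0 < vY2 ar vI m Φ c'.1 c'.2)
      = ((Finset.univ.filter (fun c : CVert σ ar I => 0 < vI c.1 c.2)) ×ˢ
          (Finset.univ : Finset (Fin m))).map ⟨_, hembS⟩ := by
    ext c'
    simp only [Finset.mem_map, Finset.mem_filter, Finset.mem_univ, true_and,
      Finset.mem_product, Function.Embedding.coeFn_mk]
    constructor
    · intro hps
      obtain ⟨hv, ℓ, hℓ⟩ := (vY2_pos_iff ar vI m Φ hm c'.1 c'.2).mp hps
      refine ⟨(⟨c'.1, fun i => (c'.2 i).1⟩, ℓ), ⟨hv, trivial⟩, ?_⟩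
      show (⟨c'.1, scopeF ar m Φ ⟨c'.1, fun i => (c'.2 i).1⟩ ℓ⟩
        : CVert σ ar (I × Fin m)) = c'
      rw [← hℓ]
    · rintro ⟨⟨c, ℓ⟩, ⟨hv, -⟩, rfl⟩
      exact (vY2_pos_iff ar vI m Φ hm _ _).mpr ⟨hv, ⟨ℓ, rfl⟩⟩
  rw [hfil1, hfil2, Finset.map_val, Finset.map_val, Multiset.map_map, Multiset.map_map]
  apply Multiset.map_congr rfl
  intro q hq
  simp only [Function.comp_apply, Function.Embedding.coeFn_mk]
  exact rfl

end PairConstruction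
/-! ## Stage 4c: cost of the twisted structure under the canonical assignment -/

section ValIdentity

variable {σ : Type} [Fintype σ] (ar : σ → ℕ) {I : Type} [Fintype I] [DecidableEq I]
  {A : Type} [Fintype A] [DecidableEq A]
  (vI : ∀ R : σ, (Fin (ar R) → I) → ℚ)
  (vA : ∀ R : σ, (Fin (ar R) → A) → WithTop ℚ)
  (pv : I → A → ℚ) (pc : ∀ R : σ, (Fin (ar R) → I) → (Fin (ar R) → A) → ℚ)
  (m : ℕ) (g : I → Fin m → A)
  (LL : ∀ c : CVert σ ar I, Fin m → (Fin (ar c.1) → A))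
  (Φ : ∀ c : CVert σ ar I, Fin m → I → Fin m)

lemma val_vY2 (hm : 0 < m) (har : ∀ R, 0 < ar R) (hnn : NNeg ar vI)
    (hfeas : SA1Feas ar vI vA pv pc)
    (hΦinj : ∀ c u, Function.Injective (fun ℓ => Φ c ℓ u))
    (hcomp : ∀ c : CVert σ ar I, 0 < vI c.1 c.2 →
      ∀ ℓ i, g (c.2 i) (Φ c ℓ (c.2 i)) = LL c ℓ i)
    (hcard : ∀ c : CVert σ ar I, 0 < vI c.1 c.2 → ∀ t : Fin (ar c.1) → A,
      ((Finset.univ.filter (fun ℓ => LL c ℓ = t)).card : ℚ) = m * pc c.1 c.2 t) :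
    (∑ R : σ, ∑ t : Fin (ar R) → I × Fin m,
      ((vY2 ar vI m Φ R t : ℚ) : WithTop ℚ) * vA R (fun i => g (t i).1 (t i).2))
    = objVal ar vI vA pc := by
  classical
  have hmq : (0 : ℚ) < (m : ℚ) := by exact_mod_cast hm
  unfold objVal
  apply Finset.sum_congr rfl
  intro R _
  set sc : (Fin (ar R) → I) × Fin m → (Fin (ar R) → I × Fin m) :=
    fun q i => (q.1 i, Φ ⟨R, q.1⟩ q.2 (q.1 i)) with hsc
  have hembS : Function.Injective sc := by
    rintro ⟨v, ℓ⟩ ⟨v', ℓ'⟩ h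
    have h4 : v = v' := funext fun i => congrArg Prod.fst (congrFun h i)
    subst h4
    have h5 : ℓ = ℓ' := by
      apply hΦinj ⟨R, v⟩ (v ⟨0, har R⟩)
      exact congrArg Prod.snd (congrFun h ⟨0, har R⟩)
    subst h5; rfl
  set AS : Finset (Fin (ar R) → I × Fin m) :=
    ((Finset.univ.filter (fun v : Fin (ar R) → I => 0 < vI R v)) ×ˢ
      (Finset.univ : Finset (Fin m))).map ⟨_, hembS⟩ with hAS
  have hstep1 : (∑ t : Fin (ar R) → I × Fin m,
      ((vY2 ar vI m Φ R t : ℚ) : WithTop ℚ) * vA R (fun i => g (t i).1 (t i).2))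
      = ∑ t ∈ AS, ((vY2 ar vI m Φ R t : ℚ) : WithTop ℚ)
          * vA R (fun i => g (t i).1 (t i).2) := by
    refine (Finset.sum_subset (Finset.subset_univ AS) ?_).symm
    intro t _ ht
    have hz : vY2 ar vI m Φ R t = 0 := by
      by_contra hne
      have hpos : 0 < vY2 ar vI m Φ R t := by
        unfold vY2 at hne ⊢
        split_ifs at hne ⊢ with h
        · exact div_pos h.1 hmq
        · exact absurd rfl hne
      obtain ⟨hv, ℓ, hℓ⟩ := (vY2_pos_iff ar vI m Φ hm R t).mp hpos
      apply ht
      rw [hAS]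
      refine Finset.mem_map.mpr ⟨((fun i => (t i).1), ℓ), ?_, hℓ.symm⟩
      exact Finset.mem_product.mpr ⟨Finset.mem_filter.mpr ⟨Finset.mem_univ _, hv⟩,
        Finset.mem_univ _⟩
    rw [hz]
    simp
  rw [hstep1, hAS, Finset.sum_map, Finset.sum_product]
  simp only [Function.Embedding.coeFn_mk]
  have hstep3 : ∀ v ∈ Finset.univ.filter (fun v : Fin (ar R) → I => 0 < vI R v),
      ∀ ℓ : Fin m,
      ((vY2 ar vI m Φ R (sc (v, ℓ)) : ℚ) : WithTop ℚ)
          * vA R (fun i => g ((sc (v, ℓ)) i).1 ((sc (v, ℓ)) i).2)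
        = ((vI R v / m : ℚ) : WithTop ℚ) * vA R (LL ⟨R, v⟩ ℓ) := by
    intro v hv ℓ
    have hv' : 0 < vI R v := (Finset.mem_filter.mp hv).2
    have hval : vY2 ar vI m Φ R (sc (v, ℓ)) = vI R v / m := by
      unfold vY2
      rw [if_pos ⟨hv', ⟨ℓ, rfl⟩⟩]
    have harg : (fun i => g ((sc (v, ℓ)) i).1 ((sc (v, ℓ)) i).2)
        = LL ⟨R, v⟩ ℓ := by
      funext i
      exact hcomp ⟨R, v⟩ hv' ℓ i
    rw [hval, harg]
  rw [Finset.sum_congr rfl (fun v hv => Finset.sum_congr rfl (fun ℓ _ => hstep3 v hv ℓ))]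
  have hstep4 : ∀ v ∈ Finset.univ.filter (fun v : Fin (ar R) → I => 0 < vI R v),
      (∑ ℓ : Fin m, ((vI R v / m : ℚ) : WithTop ℚ) * vA R (LL ⟨R, v⟩ ℓ))
      = ∑ t : Fin (ar R) → A, ((pc R v t : ℚ) : WithTop ℚ)
          * (((vI R v : ℚ) : WithTop ℚ) * vA R t) := by
    intro v hv
    have hv' : 0 < vI R v := (Finset.mem_filter.mp hv).2
    rw [Finset.sum_comp (fun t : Fin (ar R) → A =>
      ((vI R v / m : ℚ) : WithTop ℚ) * vA R t) (LL ⟨R, v⟩)]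
    rw [Finset.sum_subset (Finset.subset_univ (Finset.univ.image (LL ⟨R, v⟩))) ?hvan]
    case hvan =>
      intro t _ ht
      have hzero : (Finset.univ.filter (fun ℓ => LL ⟨R, v⟩ ℓ = t)).card = 0 := by
        rw [Finset.card_eq_zero, Finset.filter_eq_empty_iff]
        intro ℓ _
        intro hc
        exact ht (Finset.mem_image.mpr ⟨ℓ, Finset.mem_univ _, hc⟩)
      rw [hzero, zero_nsmul]
    apply Finset.sum_congr rfl
    intro t _
    have hcardt := hcard ⟨R, v⟩ hv' t
    cases hvA : vA R t with
    | top =>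
      have hpc0 : pc R v t = 0 := hfeas.1.2.2.2 R v hv' t hvA
      have hn0 : (Finset.univ.filter (fun ℓ => LL ⟨R, v⟩ ℓ = t)).card = 0 := by
        have : ((Finset.univ.filter (fun ℓ => LL ⟨R, v⟩ ℓ = t)).card : ℚ) = 0 := by
          rw [hcardt, hpc0, mul_zero]
        exact_mod_cast this
      rw [hn0, zero_nsmul, hpc0]
      simp
    | coe q =>
      rw [← WithTop.coe_mul, ← WithTop.coe_mul, ← WithTop.coe_mul, ← WithTop.coe_nsmul]
      rw [WithTop.coe_eq_coe]
      rw [nsmul_eq_mul, hcardt]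
      field_simp
  rw [Finset.sum_congr rfl hstep4]
  refine Finset.sum_subset (Finset.subset_univ _) ?_
  intro v _ hv
  have hz : vI R v = 0 := by
    by_contra hne
    exact hv (Finset.mem_filter.mpr ⟨Finset.mem_univ _,
      lt_of_le_of_ne (hnn R v) (Ne.symm hne)⟩)
  apply Finset.sum_eq_zero
  intro t _
  rw [hz]
  simp

end ValIdentity
/-! ## Stage 5: the main theorem -/

theorem stmt_6 {σ : Type} [Fintype σ] (ar : σ → ℕ) (har : ∀ R, 0 < ar R)
    {I : Type} [Fintype I] [DecidableEq I]
    (vI : ∀ R : σ, (Fin (ar R) → I) → ℚ) (hnn : NNeg ar vI)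
    {A : Type} [Fintype A] [DecidableEq A]
    (vA : ∀ R : σ, (Fin (ar R) → A) → WithTop ℚ) :
    ∃ (n₁ n₂ : ℕ)
      (vY₁ : ∀ R : σ, (Fin (ar R) → Fin n₁) → ℚ)
      (vY₂ : ∀ R : σ, (Fin (ar R) → Fin n₂) → ℚ),
      NNeg ar vY₁ ∧ NNeg ar vY₂ ∧
      (∃ η : (I → Fin n₁) → ℚ, IsDualFracHom ar vI vY₁ η) ∧
      degSeq ar vY₁ = degSeq ar vY₂ ∧
      toE (Opt ar vY₂ vA) ≤ OptSA1 ar vI vA := by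
  classical
  by_cases hI : Nonempty I
  swap
  · -- I is empty
    haveI hIe : IsEmpty I := not_nonempty_iff.mp hI
    refine ⟨0, 0, fun R t => 0, fun R t => 0, fun R v => le_refl 0, fun R v => le_refl 0,
      ⟨fun _ => 1, fun f => zero_le_one, ?_, ?_⟩, rfl, ?_⟩
    · haveI : Unique (I → Fin 0) := Pi.uniqueOfIsEmpty _
      rw [Fintype.sum_unique]
    · intro R u'
      exact (u' ⟨0, har R⟩).elim0
    · have hval : ∀ h : Fin 0 → A, Val ar (fun (R : σ) (t : Fin (ar R) → Fin 0) => (0 : ℚ))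
          vA h = 0 := by
        intro h
        unfold Val
        apply Finset.sum_eq_zero
        intro R _
        haveI : IsEmpty (Fin (ar R) → Fin 0) := ⟨fun v => (v ⟨0, har R⟩).elim0⟩
        rw [Finset.univ_eq_empty, Finset.sum_empty]
      have hopt0 : Opt ar (fun (R : σ) (t : Fin (ar R) → Fin 0) => (0 : ℚ)) vA = 0 := by
        apply le_antisymm
        · have h1 : Opt ar (fun (R : σ) (t : Fin (ar R) → Fin 0) => (0 : ℚ)) vA
              ≤ Val ar (fun (R : σ) (t : Fin (ar R) → Fin 0) => (0 : ℚ)) vA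
                (fun x : Fin 0 => x.elim0) := Finset.inf_le (Finset.mem_univ _)
          rw [hval] at h1
          exact h1
        · exact Finset.le_inf (fun h _ => le_of_eq (hval h).symm)
      rw [hopt0]
      apply le_sInf
      rintro b ⟨pv', pc', hf', rfl⟩
      have hobj : objVal ar vI vA pc' = 0 := by
        unfold objVal
        apply Finset.sum_eq_zero
        intro R _
        haveI : IsEmpty (Fin (ar R) → I) := ⟨fun v => hIe.elim (v ⟨0, har R⟩)⟩
        rw [Finset.univ_eq_empty, Finset.sum_empty]
      rw [hobj]
  by_cases hfe : ∃ pv pc, SA1Feas ar vI vA pv pc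
  swap
  · -- SA¹ is infeasible
    set n := Fintype.card I with hn
    set eI : I ≃ Fin n := Fintype.equivFin I with heI
    refine ⟨n, n, fun R t => vI R (fun i => eI.symm (t i)),
      fun R t => vI R (fun i => eI.symm (t i)),
      fun R v => hnn R _, fun R v => hnn R _,
      ⟨fun f => if f = (fun u => eI u) then 1 else 0, fun f => by positivity, ?_, ?_⟩,
      rfl, ?_⟩
    · rw [Finset.sum_ite_eq' Finset.univ (fun u => eI u) (fun _ => (1 : ℚ))]
      simp
    · intro R u'
      have hterm : ∀ f : I → Fin n,
          (if f = (fun u => eI u) then (1 : ℚ) else 0) *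
            ∑ v ∈ Finset.univ.filter
              (fun v : Fin (ar R) → I => (fun i => f (v i)) = u'), vI R v
          = if f = (fun u => eI u) then
              (∑ v ∈ Finset.univ.filter
                (fun v : Fin (ar R) → I => (fun i => f (v i)) = u'), vI R v) else 0 := by
        intro f
        split_ifs with h
        · rw [one_mul]
        · rw [zero_mul]
      rw [Finset.sum_congr rfl (fun f _ => hterm f)]
      rw [Finset.sum_ite_eq' Finset.univ (fun u => eI u)]
      rw [if_pos (Finset.mem_univ _)]
      have hfil : Finset.univ.filter
          (fun v : Fin (ar R) → I => (fun i => (fun u => eI u) (v i)) = u')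
          = {fun i => eI.symm (u' i)} := by
        ext v
        simp only [Finset.mem_filter, Finset.mem_univ, true_and, Finset.mem_singleton]
        constructor
        · intro hfv
          funext i
          rw [← congrFun hfv i, Equiv.symm_apply_apply]
        · intro hv
          subst hv
          funext i
          rw [Equiv.apply_symm_apply]
      rw [hfil, Finset.sum_singleton]
    · apply le_sInf
      rintro b ⟨pv', pc', hf', rfl⟩
      exact absurd ⟨pv', pc', hf'⟩ hfe
  -- main case
  obtain ⟨pv, pc, hfeas, hoptle⟩ := exists_optimal_SA1 ar I A vI vA har hnn hI hfe
  have hA : Nonempty A := by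
    by_contra hA
    haveI : IsEmpty A := not_nonempty_iff.mp hA
    have h1 : ∑ a : A, pv hI.some a = 1 := hfeas.1.2.1 _
    rw [Finset.univ_eq_empty, Finset.sum_empty] at h1
    norm_num at h1
  obtain ⟨m, hm, g, LL, Φ, hΦinj, hdata⟩ :=
    exists_data_global ar vI vA pv pc har hA hfeas
  have hmq : (0 : ℚ) < (m : ℚ) := by exact_mod_cast hm
  have hmne : (m : ℚ) ≠ 0 := ne_of_gt hmq
  set n := Fintype.card (I × Fin m) with hn
  set eqv : (I × Fin m) ≃ Fin n := Fintype.equivFin _ with heqv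
  have hsurj : ∀ c : CVert σ ar I, 0 < vI c.1 c.2 →
      ∀ u, (∃ i, c.2 i = u) → Function.Surjective (fun ℓ => Φ c ℓ u) :=
    fun c hv => (hdata c hv).1
  refine ⟨n, n,
    fun R t => vY1 ar vI m R (fun i => eqv.symm (t i)),
    fun R t => vY2 ar vI m Φ R (fun i => eqv.symm (t i)),
    fun R t => vY1_nneg ar vI m hm hnn R _,
    fun R t => vY2_nneg ar vI m Φ hm hnn R _, ?_, ?_, ?_⟩
  · -- the dual fractional homomorphism
    refine ⟨fun f => if ∃ j : Fin m, f = fun u => eqv (u, j) then (m : ℚ)⁻¹ else 0,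
      fun f => by positivity, ?_, ?_⟩
    · set D : Finset (I → Fin n) :=
        Finset.univ.image (fun j : Fin m => (fun u : I => eqv (u, j))) with hD
      have hinj : Function.Injective (fun j : Fin m => (fun u : I => eqv (u, j))) := by
        intro j j' h
        have := congrFun h hI.some
        have h2 : (hI.some, j) = (hI.some, j') := eqv.injective this
        exact congrArg Prod.snd h2
      have hcond : ∀ f : I → Fin n,
          (∃ j : Fin m, f = fun u => eqv (u, j)) ↔ f ∈ D := by
        intro f
        rw [hD, Finset.mem_image]
        constructor
        · rintro ⟨j, rfl⟩; exact ⟨j, Finset.mem_univ _, rfl⟩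
        · rintro ⟨j, -, rfl⟩; exact ⟨j, rfl⟩
      have hterm : ∀ f : I → Fin n,
          (if ∃ j : Fin m, f = fun u => eqv (u, j) then (m : ℚ)⁻¹ else 0)
          = if f ∈ D then (m : ℚ)⁻¹ else 0 := by
        intro f
        rw [if_congr (hcond f) rfl rfl]
      rw [Finset.sum_congr rfl (fun f _ => hterm f), Finset.sum_ite_mem,
        Finset.univ_inter, Finset.sum_const, hD,
        Finset.card_image_of_injective _ hinj, Finset.card_univ, Fintype.card_fin,
        nsmul_eq_mul]
      exact mul_inv_cancel₀ hmne
    · intro R u'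
      set v₀ : Fin (ar R) → I := fun i => (eqv.symm (u' i)).1 with hv₀
      set D : Finset (I → Fin n) :=
        Finset.univ.image (fun j : Fin m => (fun u : I => eqv (u, j))) with hD
      have hinj : Function.Injective (fun j : Fin m => (fun u : I => eqv (u, j))) := by
        intro j j' h
        have := congrFun h hI.some
        have h2 : (hI.some, j) = (hI.some, j') := eqv.injective this
        exact congrArg Prod.snd h2
      have hcond : ∀ f : I → Fin n,
          (∃ j : Fin m, f = fun u => eqv (u, j)) ↔ f ∈ D := by
        intro f
        rw [hD, Finset.mem_image]
        constructor
        · rintro ⟨j, rfl⟩; exact ⟨j, Finset.mem_univ _, rfl⟩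
        · rintro ⟨j, -, rfl⟩; exact ⟨j, rfl⟩
      set S : (I → Fin n) → ℚ := fun f => ∑ v ∈ Finset.univ.filter
        (fun v : Fin (ar R) → I => (fun i => f (v i)) = u'), vI R v with hS
      have hterm : ∀ f : I → Fin n,
          (if ∃ j : Fin m, f = fun u => eqv (u, j) then (m : ℚ)⁻¹ else 0) * S f
          = if f ∈ D then (m : ℚ)⁻¹ * S f else 0 := by
        intro f
        rw [if_congr (hcond f) rfl rfl]
        split_ifs with h
        · rfl
        · rw [zero_mul]
      have key : (∑ f : I → Fin n,
          (if ∃ j : Fin m, f = fun u => eqv (u, j) then (m : ℚ)⁻¹ else 0) * S f)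
          = ∑ j : Fin m, (m : ℚ)⁻¹ * S (fun u => eqv (u, j)) := by
        rw [Finset.sum_congr rfl (fun f _ => hterm f), Finset.sum_ite_mem,
          Finset.univ_inter, hD, Finset.sum_image (fun a _ b _ hab => hinj hab)]
      rw [key]
      have hSval : ∀ j : Fin m, S (fun u => eqv (u, j))
          = if (∀ i, (eqv.symm (u' i)).2 = j) then vI R v₀ else 0 := by
        intro j
        show (∑ v ∈ Finset.univ.filter
          (fun v : Fin (ar R) → I => (fun i => eqv (v i, j)) = u'), vI R v) = _
        by_cases hd : ∀ i, (eqv.symm (u' i)).2 = j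
        · rw [if_pos hd]
          have hfil : Finset.univ.filter
              (fun v : Fin (ar R) → I => (fun i => eqv (v i, j)) = u')
              = {v₀} := by
            ext v
            simp only [Finset.mem_filter, Finset.mem_univ, true_and, Finset.mem_singleton]
            constructor
            · intro hfv
              funext i
              have h1 := congrFun hfv i
              have h2 : (v i, j) = eqv.symm (u' i) := by
                rw [← h1, Equiv.symm_apply_apply]
              exact congrArg Prod.fst h2
            · intro hv
              subst hv
              funext i
              have h2 : (v₀ i, j) = eqv.symm (u' i) := Prod.ext rfl (hd i).symm
              rw [h2, Equiv.apply_symm_apply]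
          rw [hfil, Finset.sum_singleton]
        · rw [if_neg hd]
          push_neg at hd
          obtain ⟨i0, hi0⟩ := hd
          have hfil : Finset.univ.filter
              (fun v : Fin (ar R) → I => (fun i => eqv (v i, j)) = u')
              = ∅ := by
            rw [Finset.filter_eq_empty_iff]
            intro v _
            intro hfv
            apply hi0
            have h1 := congrFun hfv i0
            have h2 : (v i0, j) = eqv.symm (u' i0) := by
              rw [← h1, Equiv.symm_apply_apply]
            exact (congrArg Prod.snd h2).symm
          rw [hfil, Finset.sum_empty]
      have hterm1 : ∀ j : Fin m, (m : ℚ)⁻¹ * S (fun u => eqv (u, j))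
          = (m : ℚ)⁻¹ * (if (∀ i, (eqv.symm (u' i)).2 = j) then vI R v₀ else 0) :=
        fun j => by rw [hSval j]
      rw [Finset.sum_congr rfl (fun j _ => hterm1 j)]
      have hRHS : vY1 ar vI m R (fun i => eqv.symm (u' i))
          = if 0 < vI R v₀ ∧ (∃ j, ∀ i, (eqv.symm (u' i)).2 = j)
              then vI R v₀ / m else 0 := rfl
      by_cases hex : ∃ j0 : Fin m, ∀ i, (eqv.symm (u' i)).2 = j0
      · obtain ⟨j0, hj0⟩ := hex
        have huniq : ∀ j : Fin m, (∀ i, (eqv.symm (u' i)).2 = j) ↔ j = j0 := by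
          intro j
          constructor
          · intro hj
            rw [← hj ⟨0, har R⟩, hj0 ⟨0, har R⟩]
          · rintro rfl
            exact hj0
        have hterm2 : ∀ j : Fin m,
            (m : ℚ)⁻¹ * (if (∀ i, (eqv.symm (u' i)).2 = j) then vI R v₀ else 0)
            = if j = j0 then (m : ℚ)⁻¹ * vI R v₀ else 0 := by
          intro j
          rw [if_congr (huniq j) rfl rfl]
          split_ifs with h
          · rfl
          · rw [mul_zero]
        rw [Finset.sum_congr rfl (fun j _ => hterm2 j),
          Finset.sum_ite_eq' Finset.univ j0, if_pos (Finset.mem_univ _)]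
        by_cases hvp : 0 < vI R v₀
        · show _ ≤ vY1 ar vI m R (fun i => eqv.symm (u' i))
          rw [hRHS, if_pos ⟨hvp, ⟨j0, hj0⟩⟩, inv_mul_eq_div]
        · have h0 : vI R v₀ = 0 := le_antisymm (not_lt.mp hvp) (hnn R v₀)
          rw [h0, mul_zero]
          exact vY1_nneg ar vI m hm hnn R _
      · have hterm3 : ∀ j : Fin m,
            (m : ℚ)⁻¹ * (if (∀ i, (eqv.symm (u' i)).2 = j) then vI R v₀ else 0) = 0 := by
          intro j
          rw [if_neg (fun hj => hex ⟨j, hj⟩), mul_zero]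
        rw [Finset.sum_congr rfl (fun j _ => hterm3 j), Finset.sum_const_zero]
        exact vY1_nneg ar vI m hm hnn R _
  · -- equality of iterated degree sequences
    rw [degSeq_transport eqv.symm (vY1 ar vI m), degSeq_transport eqv.symm (vY2 ar vI m Φ)]
    exact degSeq_vY1_eq_vY2 ar vI m Φ hm har hnn hΦinj hsurj
  · -- optimal value bound
    refine le_trans (toE_mono ?_) hoptle
    set hAss : Fin n → A := fun y => g (eqv.symm y).1 (eqv.symm y).2 with hAssDef
    have hval : Val ar (fun R t => vY2 ar vI m Φ R (fun i => eqv.symm (t i))) vA hAss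
        = objVal ar vI vA pc := by
      rw [← val_vY2 ar vI vA pv pc m g LL Φ hm har hnn hfeas hΦinj
        (fun c hv => (hdata c hv).2.1) (fun c hv => (hdata c hv).2.2)]
      unfold Val
      apply Finset.sum_congr rfl
      intro R _
      refine (Fintype.sum_equiv (Equiv.piCongrRight (fun _ : Fin (ar R) => eqv))
        (fun t' => ((vY2 ar vI m Φ R t' : ℚ) : WithTop ℚ)
          * vA R (fun i => g (t' i).1 (t' i).2))
        (fun t => ((vY2 ar vI m Φ R (fun i => eqv.symm (t i)) : ℚ) : WithTop ℚ)
          * vA R (fun i => hAss (t i)))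
        (fun t' => ?_)).symm
      have e1 : (fun i => eqv.symm ((Equiv.piCongrRight (fun _ : Fin (ar R) => eqv)) t' i))
          = t' := by
        funext i
        show eqv.symm (eqv (t' i)) = t' i
        rw [Equiv.symm_apply_apply]
      have e2 : (fun i => hAss ((Equiv.piCongrRight (fun _ : Fin (ar R) => eqv)) t' i))
          = fun i => g (t' i).1 (t' i).2 := by
        funext i
        show g (eqv.symm (eqv (t' i))).1 (eqv.symm (eqv (t' i))).2 = _
        rw [Equiv.symm_apply_apply]
      simp only [e1, e2]
    have hinf : Opt ar (fun R t => vY2 ar vI m Φ R (fun i => eqv.symm (t i))) vA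
        ≤ Val ar (fun R t => vY2 ar vI m Φ R (fun i => eqv.symm (t i))) vA hAss :=
      Finset.inf_le (Finset.mem_univ hAss)
    rw [hval] at hinf
    exact hinf
end PVCSP
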